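/- arXiv:2401.16942 — 12 statements merged into one kernel-verified Lean document; each statement's English description precedes it below -/
import Mathlib

section
/- Let 0 < α < β and let u : [0,β] → ℝ≥0 be continuously differentiable, constant on [0,α], strictly decreasing and positive on [α,β). Let δ ∈ (α,β) satisfy u(δ) = u(0)/e, and let g be the density g(y) = -u'(y)/u(y) on [α,δ] (zero otherwise). Define v(x,y) = u(x) if x > y and v(x,y) = u(x) - u(y) if x ≤ y. Then for every x ∈ [0,β], the expected payoff ∫_0^β v(x,y) g(y) dy ≤ u(0)/e. -/
open MeasureTheory Set

private lemma aux_ftc {α δ : ℝ} {u u' : ℝ → ℝ}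
    (hderiv : ∀ y ∈ Set.Icc α δ, HasDerivAt u (u' y) y)
    (hcont : ContinuousOn u' (Set.Icc α δ))
    (hpos : ∀ y ∈ Set.Icc α δ, 0 < u y)
    {a b : ℝ} (c d : ℝ) (ha : α ≤ a) (hab : a ≤ b) (hb : b ≤ δ) :
    ∫ y in a..b, (c - d * u y) * (-u' y / u y)
      = c * (Real.log (u a) - Real.log (u b)) - d * (u a - u b) := by
  have hsub : Set.Icc a b ⊆ Set.Icc α δ := Set.Icc_subset_Icc ha hb
  have hune : ∀ y ∈ Set.Icc a b, u y ≠ 0 := fun y hy => (hpos y (hsub hy)).ne'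
  have hucont : ContinuousOn u (Set.Icc a b) := fun y hy =>
    (hderiv y (hsub hy)).continuousAt.continuousWithinAt
  have hint : IntervalIntegrable (fun y => (c - d * u y) * (-u' y / u y)) volume a b := by
    apply ContinuousOn.intervalIntegrable
    rw [Set.uIcc_of_le hab]
    exact (continuousOn_const.sub (continuousOn_const.mul hucont)).mul
      (((hcont.mono hsub).neg).div hucont hune)
  have hFd : ∀ y ∈ Set.uIcc a b, HasDerivAt (fun y => d * u y - c * Real.log (u y))
      ((c - d * u y) * (-u' y / u y)) y := by
    intro y hy
    rw [Set.uIcc_of_le hab] at hy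
    have h1 : HasDerivAt u (u' y) y := hderiv y (hsub hy)
    have h2 : HasDerivAt (fun y => Real.log (u y)) (u' y / u y) y := h1.log (hune y hy)
    have h3 := (h1.const_mul d).sub (h2.const_mul c)
    refine h3.congr_deriv ?_
    have hu := hune y hy
    have e : u y * (u y)⁻¹ = 1 := mul_inv_cancel₀ hu
    simp only [div_eq_mul_inv]
    linear_combination (-(d * u' y)) * e
  rw [intervalIntegral.integral_eq_sub_of_hasDerivAt hFd hint]
  ring

/-- Against the hazard-rate density g, every pure action x of the maximizing
player yields expected payoff at most u(0)/e, where v(x,y) = u(x) if x > y and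
u(x) - u(y) if x ≤ y. -/
theorem stmt_2 (α β δ : ℝ) (u u' g : ℝ → ℝ) (v : ℝ → ℝ → ℝ)
    (hα : 0 < α) (hαβ : α < β)
    (hderiv : ∀ y ∈ Set.Icc α β, HasDerivAt u (u' y) y)
    (hderivcont : ContinuousOn u' (Set.Icc α β))
    (hconst : ∀ x ∈ Set.Icc 0 α, u x = u 0)
    (hdec : StrictAntiOn u (Set.Icc α β))
    (hposu : ∀ x ∈ Set.Ico α β, 0 < u x)
    (hδ : δ ∈ Set.Ioo α β) (hδe : u δ = u 0 / Real.exp 1)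
    (hg : ∀ y, g y = if y ∈ Set.Icc α δ then -u' y / u y else 0)
    (hv : ∀ x y, v x y = if x > y then u x else u x - u y) :
    ∀ x ∈ Set.Icc (0:ℝ) β, (∫ y in (0:ℝ)..β, v x y * g y) ≤ u 0 / Real.exp 1 := by
  have huα : u α = u 0 := hconst α ⟨hα.le, le_refl α⟩
  have hu0 : 0 < u 0 := huα ▸ hposu α ⟨le_refl α, hαβ⟩
  have hsubI : Set.Icc α δ ⊆ Set.Icc α β := Set.Icc_subset_Icc le_rfl hδ.2.le
  have hderiv' : ∀ y ∈ Set.Icc α δ, HasDerivAt u (u' y) y := fun y hy => hderiv y (hsubI hy)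
  have hcont' : ContinuousOn u' (Set.Icc α δ) := hderivcont.mono hsubI
  have hpos' : ∀ y ∈ Set.Icc α δ, 0 < u y := fun y hy =>
    hposu y ⟨hy.1, lt_of_le_of_lt hy.2 hδ.2⟩
  have hlog : Real.log (u α) - Real.log (u δ) = 1 := by
    rw [huα, hδe, Real.log_div hu0.ne' (Real.exp_ne_zero 1), Real.log_exp]; ring
  have hne : ∀ p : ℝ, ∀ᵐ y : ℝ, y ≠ p := by
    intro p
    rw [MeasureTheory.ae_iff]
    simp only [ne_eq, not_not, Set.setOf_eq_eq_singleton]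
    exact measure_singleton p
  intro x hx
  set f : ℝ → ℝ := fun y => v x y * g y with hf
  -- main computation helper on subintervals of [α,δ]
  have key : ∀ a b c d : ℝ, α ≤ a → a ≤ b → b ≤ δ →
      (∀ y ∈ Set.Ioo a b, v x y = c - d * u y) →
      IntervalIntegrable f volume a b ∧
      ∫ y in a..b, f y
        = c * (Real.log (u a) - Real.log (u b)) - d * (u a - u b) := by
    intro a b c d ha hab hb hvab
    have heq : ∀ y ∈ Set.Ioo a b, f y = (c - d * u y) * (-u' y / u y) := by
      intro y hy
      have hyI : y ∈ Set.Icc α δ := ⟨le_of_lt (lt_of_le_of_lt ha hy.1), le_trans hy.2.le hb⟩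
      simp only [hf, hg y, if_pos hyI, hvab y hy]
    have hnice : IntervalIntegrable (fun y => (c - d * u y) * (-u' y / u y)) volume a b := by
      apply ContinuousOn.intervalIntegrable
      rw [Set.uIcc_of_le hab]
      have hsub : Set.Icc a b ⊆ Set.Icc α δ := Set.Icc_subset_Icc ha hb
      have hucont : ContinuousOn u (Set.Icc a b) := fun y hy =>
        (hderiv' y (hsub hy)).continuousAt.continuousWithinAt
      exact (continuousOn_const.sub (continuousOn_const.mul hucont)).mul
        (((hcont'.mono hsub).neg).div hucont (fun y hy => (hpos' y (hsub hy)).ne'))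
    have haemem : ∀ᵐ y ∂(volume.restrict (Set.uIoc a b)), y ∈ Set.uIoc a b :=
      ae_restrict_mem measurableSet_uIoc
    have haeb : ∀ᵐ y ∂(volume.restrict (Set.uIoc a b)), (y:ℝ) ≠ b :=
      (hne b).filter_mono (ae_mono Measure.restrict_le_self)
    have haeeq : (fun y => (c - d * u y) * (-u' y / u y)) =ᵐ[volume.restrict (Set.uIoc a b)] f := by
      filter_upwards [haemem, haeb] with y hy hyb
      rw [Set.uIoc_of_le hab] at hy
      exact (heq y ⟨hy.1, lt_of_le_of_ne hy.2 hyb⟩).symm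
    refine ⟨hnice.congr_ae haeeq, ?_⟩
    have : ∫ y in a..b, f y = ∫ y in a..b, (c - d * u y) * (-u' y / u y) := by
      apply intervalIntegral.integral_congr_ae
      filter_upwards [hne b] with y hyb hy
      rw [Set.uIoc_of_le hab] at hy
      exact heq y ⟨hy.1, lt_of_le_of_ne hy.2 hyb⟩
    rw [this]
    exact aux_ftc hderiv' hcont' hpos' c d ha hab hb
  -- zero pieces
  have keyz : ∀ a b : ℝ, a ≤ b → (∀ y ∈ Set.Ioo a b, (y:ℝ) ∉ Set.Icc α δ) →
      IntervalIntegrable f volume a b ∧ ∫ y in a..b, f y = 0 := by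
    intro a b hab hout
    have heq : ∀ y ∈ Set.Ioo a b, f y = 0 := by
      intro y hy
      simp only [hf, hg y, if_neg (hout y hy), mul_zero]
    have haeeq : (fun _ : ℝ => (0:ℝ)) =ᵐ[volume.restrict (Set.uIoc a b)] f := by
      filter_upwards [ae_restrict_mem (μ := volume) (s := Set.uIoc a b) measurableSet_uIoc,
        (hne b).filter_mono (ae_mono Measure.restrict_le_self)] with y hy hyb
      rw [Set.uIoc_of_le hab] at hy
      exact (heq y ⟨hy.1, lt_of_le_of_ne hy.2 hyb⟩).symm
    refine ⟨(intervalIntegrable_const (c := (0:ℝ))).congr_ae haeeq, ?_⟩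
    have : ∫ y in a..b, f y = ∫ _ in a..b, (0:ℝ) := by
      apply intervalIntegral.integral_congr_ae
      filter_upwards [hne b] with y hyb hy
      rw [Set.uIoc_of_le hab] at hy
      exact heq y ⟨hy.1, lt_of_le_of_ne hy.2 hyb⟩
    rw [this, intervalIntegral.integral_zero]
  obtain ⟨hz1int, hz1⟩ := keyz 0 α hα.le (fun y hy hyI => absurd hyI.1 (not_le.2 hy.2))
  obtain ⟨hz2int, hz2⟩ := keyz δ β hδ.2.le (fun y hy hyI => absurd hyI.2 (not_le.2 hy.1))
  -- case analysis on x
  rcases le_or_gt x α with hxα | hxα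
  · -- x ≤ α : v x y = u 0 - u y on (α, δ)
    obtain ⟨hmint, hmid⟩ := key α δ (u 0) 1 le_rfl hδ.1.le le_rfl (by
      intro y hy
      have : ¬ x > y := not_lt.2 (le_trans hxα hy.1.le)
      rw [hv x y, if_neg this, hconst x ⟨hx.1, hxα⟩, one_mul])
    have hsplit : ∫ y in (0:ℝ)..β, f y
        = (∫ y in (0:ℝ)..α, f y) + ((∫ y in α..δ, f y) + ∫ y in δ..β, f y) := by
      rw [intervalIntegral.integral_add_adjacent_intervals hmint hz2int,
        intervalIntegral.integral_add_adjacent_intervals hz1int (hmint.trans hz2int)]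
    rw [hsplit, hz1, hz2, hmid, hlog, huα, hδe]
    ring_nf
    exact le_refl _
  · rcases le_or_gt x δ with hxδ | hxδ
    · -- α < x ≤ δ
      obtain ⟨hm1int, hm1⟩ := key α x (u x) 0 le_rfl hxα.le hxδ (by
        intro y hy
        rw [hv x y, if_pos hy.2, zero_mul, sub_zero])
      obtain ⟨hm2int, hm2⟩ := key x δ (u x) 1 hxα.le hxδ le_rfl (by
        intro y hy
        rw [hv x y, if_neg (not_lt.2 hy.1.le), one_mul])
      have hmint : IntervalIntegrable f volume α δ := hm1int.trans hm2int
      have hsplit : ∫ y in (0:ℝ)..β, f y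
          = (∫ y in (0:ℝ)..α, f y) + (((∫ y in α..x, f y) + ∫ y in x..δ, f y)
            + ∫ y in δ..β, f y) := by
        rw [intervalIntegral.integral_add_adjacent_intervals hm1int hm2int,
          intervalIntegral.integral_add_adjacent_intervals hmint hz2int,
          intervalIntegral.integral_add_adjacent_intervals hz1int (hmint.trans hz2int)]
      rw [hsplit, hz1, hz2, hm1, hm2]
      have : u x * (Real.log (u α) - Real.log (u x)) - 0 * (u α - u x)
          + (u x * (Real.log (u x) - Real.log (u δ)) - 1 * (u x - u δ))
          = u x * (Real.log (u α) - Real.log (u δ)) - u x + u δ := by ring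
      rw [zero_add, this, hlog, hδe]
      ring_nf
      exact le_refl _
    · -- δ < x ≤ β
      obtain ⟨hmint, hmid⟩ := key α δ (u x) 0 le_rfl hδ.1.le le_rfl (by
        intro y hy
        rw [hv x y, if_pos (lt_trans hy.2 hxδ), zero_mul, sub_zero])
      have hsplit : ∫ y in (0:ℝ)..β, f y
          = (∫ y in (0:ℝ)..α, f y) + ((∫ y in α..δ, f y) + ∫ y in δ..β, f y) := by
        rw [intervalIntegral.integral_add_adjacent_intervals hmint hz2int,
          intervalIntegral.integral_add_adjacent_intervals hz1int (hmint.trans hz2int)]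
      rw [hsplit, hz1, hz2, hmid, hlog]
      have hlt : u x < u δ := hdec ⟨hδ.1.le, hδ.2.le⟩ ⟨le_trans hδ.1.le hxδ.le, hx.2⟩ hxδ
      calc 0 + (u x * 1 - 0 * (u α - u δ) + 0) = u x := by ring
        _ ≤ u 0 / Real.exp 1 := by rw [← hδe]; exact hlt.le
end

section
/- Under the hypotheses of the previous setup (u continuously differentiable, constant equal to u(0)>0 on [0,α], strictly decreasing and positive on [α,β), δ with u(δ)=u(0)/e, g(y) = -u'(y)/u(y) on [α,δ]), for every x ∈ [α,δ] the expected payoff ∫_0^β v(x,y) g(y) dy equals exactly u(0)/e, where v(x,y) = u(x) for x > y and u(x) - u(y) for x ≤ y. -/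
open MeasureTheory intervalIntegral Set

/-- Against the hazard-rate density g, every pure action x of the maximizing
player in \[α,δ\] yields expected payoff exactly u(0)/e, where v(x,y) = u(x) if x > y and
u(x) - u(y) if x ≤ y. -/
theorem stmt_3 (α β δ : ℝ) (u u' g : ℝ → ℝ) (v : ℝ → ℝ → ℝ)
    (hα : 0 < α) (hαβ : α < β)
    (hderiv : ∀ y ∈ Set.Icc α β, HasDerivAt u (u' y) y)
    (hderivcont : ContinuousOn u' (Set.Icc α β))
    (hconst : ∀ x ∈ Set.Icc 0 α, u x = u 0)
    (hdec : StrictAntiOn u (Set.Icc α β))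
    (hposu : ∀ x ∈ Set.Ico α β, 0 < u x)
    (hδ : δ ∈ Set.Ioo α β) (hδe : u δ = u 0 / Real.exp 1)
    (hg : ∀ y, g y = if y ∈ Set.Icc α δ then -u' y / u y else 0)
    (hv : ∀ x y, v x y = if x > y then u x else u x - u y) :
    ∀ x ∈ Set.Icc α δ, (∫ y in (0:ℝ)..β, v x y * g y) = u 0 / Real.exp 1 := by
  obtain ⟨hαδ, hδβ⟩ := hδ
  intro x hx
  obtain ⟨hαx, hxδ⟩ := hx
  have hsub : Set.Icc α δ ⊆ Set.Icc α β := Set.Icc_subset_Icc le_rfl hδβ.le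
  have upos : ∀ y ∈ Set.Icc α δ, 0 < u y := fun y hy =>
    hposu y ⟨hy.1, lt_of_le_of_lt hy.2 hδβ⟩
  have huα : u α = u 0 := hconst α ⟨hα.le, le_rfl⟩
  have hu0 : 0 < u 0 := huα ▸ upos α ⟨le_rfl, hαδ.le⟩
  set F : ℝ → ℝ := fun y => v x y * g y with hF
  -- continuity facts
  have hcontu : ContinuousOn u (Set.Icc α β) := fun y hy =>
    (hderiv y hy).continuousAt.continuousWithinAt
  have hconth : ContinuousOn (fun y => -u' y / u y) (Set.Icc α δ) := by
    apply ContinuousOn.div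
    · exact (hderivcont.mono hsub).neg
    · exact hcontu.mono hsub
    · exact fun y hy => (upos y hy).ne'
  -- a.e. ≠ point
  have ae_ne : ∀ c : ℝ, ∀ᵐ y : ℝ, y ≠ c := by
    intro c
    rw [MeasureTheory.ae_iff]
    simp only [not_not]
    simpa using Real.volume_singleton (x := c)
  -- transfer integrability through a.e. equality on uIoc
  have key : ∀ (a b : ℝ) (G : ℝ → ℝ), (∀ᵐ y : ℝ, y ∈ Set.uIoc a b → F y = G y) →
      IntervalIntegrable G volume a b → IntervalIntegrable F volume a b := by
    intro a b G hae hG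
    refine hG.congr_ae ?_
    have h1 := MeasureTheory.ae_restrict_of_ae (s := Set.uIoc a b) hae
    have h2 := MeasureTheory.ae_restrict_mem (μ := volume) (s := Set.uIoc a b)
      measurableSet_uIoc
    filter_upwards [h1, h2] with y hy hmem using (hy hmem).symm
  -- a.e. descriptions on the four pieces
  have hae1 : ∀ᵐ y : ℝ, y ∈ Set.uIoc (0:ℝ) α → F y = (fun _ => (0:ℝ)) y := by
    filter_upwards [ae_ne α] with y hy hmem
    rw [Set.uIoc_of_le hα.le] at hmem
    have : y ∉ Set.Icc α δ := fun h => hy (le_antisymm hmem.2 h.1)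
    simp [hF, hg y, this]
  have hae2 : ∀ y ∈ Set.uIoc δ β, F y = (fun _ => (0:ℝ)) y := by
    intro y hmem
    rw [Set.uIoc_of_le hδβ.le] at hmem
    have : y ∉ Set.Icc α δ := fun h => absurd hmem.1 (not_lt.mpr h.2)
    simp [hF, hg y, this]
  have hae3 : ∀ᵐ y : ℝ, y ∈ Set.uIoc α x → F y = u x * (-u' y / u y) := by
    filter_upwards [ae_ne x] with y hy hmem
    rw [Set.uIoc_of_le hαx] at hmem
    have hylt : y < x := lt_of_le_of_ne hmem.2 hy
    have hyIcc : y ∈ Set.Icc α δ := ⟨hmem.1.le, le_trans hmem.2 hxδ⟩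
    simp [hF, hg y, hv, hyIcc, hylt]
  have hae4 : ∀ y ∈ Set.uIoc x δ, F y = u x * (-u' y / u y) + u' y := by
    intro y hmem
    rw [Set.uIoc_of_le hxδ] at hmem
    have hyIcc : y ∈ Set.Icc α δ := ⟨le_trans hαx hmem.1.le, hmem.2⟩
    have hne : u y ≠ 0 := (upos y hyIcc).ne'
    have hnx : ¬ x > y := not_lt.mpr hmem.1.le
    rw [hF]
    simp only [hg y, hv, if_pos hyIcc, if_neg hnx]
    field_simp
    ring
  -- continuity of the model integrands on the relevant intervals
  have hsub3 : Set.uIcc α x ⊆ Set.Icc α δ := by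
    rw [Set.uIcc_of_le hαx]; exact Set.Icc_subset_Icc le_rfl hxδ
  have hsub4 : Set.uIcc x δ ⊆ Set.Icc α δ := by
    rw [Set.uIcc_of_le hxδ]; exact Set.Icc_subset_Icc hαx le_rfl
  have hcont3 : ContinuousOn (fun y => u x * (-u' y / u y)) (Set.uIcc α x) :=
    (hconth.mono hsub3).const_smul (u x)
  have hcont4 : ContinuousOn (fun y => u x * (-u' y / u y) + u' y) (Set.uIcc x δ) :=
    ((hconth.mono hsub4).const_smul (u x)).add (hderivcont.mono (hsub4.trans hsub))
  -- integrability of the four pieces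
  have int1 : IntervalIntegrable F volume 0 α := key 0 α _ hae1 intervalIntegrable_const
  have int2 : IntervalIntegrable F volume δ β :=
    key δ β _ (Filter.Eventually.of_forall hae2) intervalIntegrable_const
  have int3 : IntervalIntegrable F volume α x := key α x _ hae3 hcont3.intervalIntegrable
  have int4 : IntervalIntegrable F volume x δ :=
    key x δ _ (Filter.Eventually.of_forall hae4) hcont4.intervalIntegrable
  -- split the integral
  have hsplit : (∫ y in (0:ℝ)..β, F y) =
      (∫ y in (0:ℝ)..α, F y) + ((∫ y in α..x, F y) + (∫ y in x..δ, F y))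
        + (∫ y in δ..β, F y) := by
    have a1 := integral_add_adjacent_intervals int1 ((int3.trans int4).trans int2)
    have a2 := integral_add_adjacent_intervals (int3.trans int4) int2
    have a3 := integral_add_adjacent_intervals int3 int4
    linarith
  -- evaluate each piece
  have e1 : (∫ y in (0:ℝ)..α, F y) = 0 := by
    rw [intervalIntegral.integral_congr_ae hae1]; simp
  have e2 : (∫ y in δ..β, F y) = 0 := by
    rw [intervalIntegral.integral_congr_ae (Filter.Eventually.of_forall hae2)]; simp
  -- FTC facts
  have hlog : ∀ y ∈ Set.Icc α δ, HasDerivAt (fun z => -Real.log (u z)) (-u' y / u y) y := by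
    intro y hy
    have := ((hderiv y (hsub hy)).log (upos y hy).ne').neg
    simpa [neg_div, Pi.neg_def] using this
  have e3 : (∫ y in α..x, F y) = u x * (Real.log (u α) - Real.log (u x)) := by
    rw [intervalIntegral.integral_congr_ae hae3]
    rw [intervalIntegral.integral_const_mul]
    have := intervalIntegral.integral_eq_sub_of_hasDerivAt
      (f := fun z => -Real.log (u z)) (f' := fun y => -u' y / u y)
      (fun t ht => hlog t (hsub3 ht)) ((hconth.mono hsub3).intervalIntegrable)
    rw [this]; ring
  have e4 : (∫ y in x..δ, F y) =
      (u x * (-Real.log (u δ)) + u δ) - (u x * (-Real.log (u x)) + u x) := by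
    rw [intervalIntegral.integral_congr_ae (Filter.Eventually.of_forall hae4)]
    exact intervalIntegral.integral_eq_sub_of_hasDerivAt
      (f := fun z => u x * (-Real.log (u z)) + u z)
      (f' := fun y => u x * (-u' y / u y) + u' y)
      (fun t ht => ((hlog t (hsub4 ht)).const_mul (u x)).add (hderiv t (hsub (hsub4 ht))))
      hcont4.intervalIntegrable
  -- wrap up
  have hlog1 : Real.log (u α) - Real.log (u δ) = 1 := by
    rw [huα, hδe, Real.log_div hu0.ne' (Real.exp_ne_zero 1), Real.log_exp]
    ring
  rw [show (∫ y in (0:ℝ)..β, v x y * g y) = ∫ y in (0:ℝ)..β, F y from rfl,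
      hsplit, e1, e2, e3, e4, ← hδe]
  linear_combination (u x) * hlog1
end

section
/- Let 0 < α < β, u as above, δ with u(δ) = u(0)/e, and let F be the CDF with F(y) = u(δ)/u(y) on [α,δ] (atom 1/e at 0, constant u(δ)/u(0) on [0,α)), F = 1 on [δ,β]. Define v(x,y) = u(x) if x > y, u(x) - u(y) if x ≤ y. Then for every y ∈ [0,β], the expected payoff E_{x∼F}[v(x,y)] ≥ u(0)/e. -/
open MeasureTheory Set

/-- Against the adversary's mixed strategy F (atom of mass 1/e = u(δ)/u(0) at 0
and density u(δ)·(-u'(x))/u(x)² on [α,δ]), every pure response y of the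
minimizer yields expected payoff at least u(0)/e, where v(x,y) = u(x) if x > y
and u(x) - u(y) if x ≤ y. -/
theorem stmt_5 (α β δ : ℝ) (u u' : ℝ → ℝ) (v : ℝ → ℝ → ℝ)
    (hα : 0 < α) (hαβ : α < β)
    (hderiv : ∀ y ∈ Set.Icc α β, HasDerivAt u (u' y) y)
    (hderivcont : ContinuousOn u' (Set.Icc α β))
    (hconst : ∀ x ∈ Set.Icc 0 α, u x = u 0)
    (hdec : StrictAntiOn u (Set.Icc α β))
    (hposu : ∀ x ∈ Set.Ico α β, 0 < u x)
    (hδ : δ ∈ Set.Ioo α β) (hδe : u δ = u 0 / Real.exp 1)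
    (hv : ∀ x y, v x y = if x > y then u x else u x - u y) :
    ∀ y ∈ Set.Icc (0:ℝ) β,
      (u δ / u 0) * v 0 y + (∫ x in α..δ, v x y * (u δ * (-u' x) / (u x) ^ 2))
        ≥ u 0 / Real.exp 1 := by
  intro y hy
  obtain ⟨hαδ, hδβ⟩ := hδ
  have hu0α : u α = u 0 := hconst α ⟨hα.le, le_refl α⟩
  have huα : 0 < u α := hposu α ⟨le_refl α, hαβ⟩
  have hu0 : 0 < u 0 := hu0α ▸ huα
  have hpos : ∀ x ∈ Set.Icc α δ, 0 < u x := fun x hx =>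
    hposu x ⟨hx.1, lt_of_le_of_lt hx.2 hδβ⟩
  have huδ : 0 < u δ := hpos δ ⟨hαδ.le, le_refl δ⟩
  have hIccsub : Set.Icc α δ ⊆ Set.Icc α β := Set.Icc_subset_Icc le_rfl hδβ.le
  have hucont : ContinuousOn u (Set.Icc α β) := fun x hx =>
    ((hderiv x hx).continuousAt).continuousWithinAt
  have hcontd : ContinuousOn (fun x => u δ * (-u' x) / u x ^ 2) (Set.Icc α δ) := by
    apply ContinuousOn.div
    · exact continuousOn_const.mul (hderivcont.mono hIccsub).neg
    · exact (hucont.mono hIccsub).pow 2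
    · intro x hx; exact pow_ne_zero 2 (hpos x hx).ne'
  have hcontud : ContinuousOn (fun x => u x * (u δ * (-u' x) / u x ^ 2)) (Set.Icc α δ) :=
    (hucont.mono hIccsub).mul hcontd
  have hintd : ∀ a b, α ≤ a → a ≤ b → b ≤ δ →
      IntervalIntegrable (fun x => u δ * (-u' x) / u x ^ 2) volume a b := by
    intro a b ha hab hb
    refine (hcontd.mono ?_).intervalIntegrable
    rw [Set.uIcc_of_le hab]
    exact Set.Icc_subset_Icc ha hb
  have hintud : ∀ a b, α ≤ a → a ≤ b → b ≤ δ →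
      IntervalIntegrable (fun x => u x * (u δ * (-u' x) / u x ^ 2)) volume a b := by
    intro a b ha hab hb
    refine (hcontud.mono ?_).intervalIntegrable
    rw [Set.uIcc_of_le hab]
    exact Set.Icc_subset_Icc ha hb
  have key1 : ∀ a b, α ≤ a → a ≤ b → b ≤ δ →
      ∫ x in a..b, u δ * (-u' x) / u x ^ 2 = u δ / u b - u δ / u a := by
    intro a b ha hab hb
    apply intervalIntegral.integral_eq_sub_of_hasDerivAt (f := fun x => u δ / u x)
    · intro x hx
      rw [Set.uIcc_of_le hab] at hx
      have hx' : x ∈ Set.Icc α δ := ⟨ha.trans hx.1, hx.2.trans hb⟩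
      have hux := hpos x hx'
      have hd : HasDerivAt u (u' x) x := hderiv x (hIccsub hx')
      have h2 := (hasDerivAt_const x (u δ)).div hd hux.ne'
      convert h2 using 1
      · rfl
      · rfl
      · ring
    · exact hintd a b ha hab hb
  have key2 : ∀ a b, α ≤ a → a ≤ b → b ≤ δ →
      ∫ x in a..b, u x * (u δ * (-u' x) / u x ^ 2)
        = u δ * Real.log (u a) - u δ * Real.log (u b) := by
    intro a b ha hab hb
    have h := intervalIntegral.integral_eq_sub_of_hasDerivAt
      (f := fun x => -(u δ * Real.log (u x)))
      (f' := fun x => u x * (u δ * (-u' x) / u x ^ 2)) (a := a) (b := b) ?_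
      (hintud a b ha hab hb)
    · rw [h]; ring
    · intro x hx
      rw [Set.uIcc_of_le hab] at hx
      have hx' : x ∈ Set.Icc α δ := ⟨ha.trans hx.1, hx.2.trans hb⟩
      have hux := hpos x hx'
      have hd : HasDerivAt u (u' x) x := hderiv x (hIccsub hx')
      have h2 := ((hd.log hux.ne').const_mul (u δ)).neg
      convert h2 using 1
      · rfl
      · field_simp
  have hloguδ : Real.log (u δ) = Real.log (u 0) - 1 := by
    rw [hδe, Real.log_div hu0.ne' (Real.exp_ne_zero 1), Real.log_exp]
  have he1 : (0:ℝ) < Real.exp 1 := Real.exp_pos 1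
  rcases le_or_gt y δ with hyδ | hyδ
  · rcases le_or_gt y α with hyα | hyα
    · -- y ≤ α
      have hv0 : v 0 y = 0 := by
        rw [hv, if_neg (by linarith [hy.1] : ¬ (0:ℝ) > y), hconst y ⟨hy.1, hyα⟩]
        ring
      have hI : (∫ x in α..δ, v x y * (u δ * (-u' x) / u x ^ 2))
          = ∫ x in α..δ, u x * (u δ * (-u' x) / u x ^ 2) := by
        apply intervalIntegral.integral_congr_ae
        apply Filter.Eventually.of_forall
        intro x hx
        rw [Set.uIoc_of_le hαδ.le] at hx
        rw [hv, if_pos (lt_of_le_of_lt hyα hx.1)]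
      rw [hv0, hI, key2 α δ le_rfl hαδ.le le_rfl, hu0α, hloguδ, hδe]
      exact ge_of_eq (by ring)
    · -- α < y ≤ δ
      have huy : 0 < u y := hpos y ⟨hyα.le, hyδ⟩
      have hv0 : v 0 y = u 0 - u y := by
        rw [hv, if_neg (by linarith [hy.1] : ¬ (0:ℝ) > y)]
      have hmeq1 : Set.EqOn (fun x => v x y * (u δ * (-u' x) / u x ^ 2))
          (fun x => (u x - u y) * (u δ * (-u' x) / u x ^ 2)) (Set.uIcc α y) := by
        intro x hx
        rw [Set.uIcc_of_le hyα.le] at hx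
        simp only [hv, if_neg (not_lt.2 hx.2)]
      have hmeq2 : Set.EqOn (fun x => v x y * (u δ * (-u' x) / u x ^ 2))
          (fun x => u x * (u δ * (-u' x) / u x ^ 2)) (Set.uIoc y δ) := by
        intro x hx
        rw [Set.uIoc_of_le hyδ] at hx
        simp only [hv, if_pos hx.1]
      have hint_sub : IntervalIntegrable
          (fun x => (u x - u y) * (u δ * (-u' x) / u x ^ 2)) volume α y := by
        have h := (hintud α y le_rfl hyα.le hyδ).sub
          ((hintd α y le_rfl hyα.le hyδ).const_mul (u y))
        convert h using 1
        funext x; ring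
      have hintv1 : IntervalIntegrable
          (fun x => v x y * (u δ * (-u' x) / u x ^ 2)) volume α y := by
        rw [intervalIntegrable_iff] at hint_sub ⊢
        exact hint_sub.congr_fun
          (fun x hx => (hmeq1 (Set.uIoc_subset_uIcc hx)).symm) measurableSet_uIoc
      have hintv2 : IntervalIntegrable
          (fun x => v x y * (u δ * (-u' x) / u x ^ 2)) volume y δ := by
        rw [intervalIntegrable_iff]
        have h := hintud y δ hyα.le hyδ le_rfl
        rw [intervalIntegrable_iff] at h
        exact h.congr_fun (fun x hx => (hmeq2 hx).symm) measurableSet_uIoc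
      have hsplit := intervalIntegral.integral_add_adjacent_intervals hintv1 hintv2
      have hI1 : (∫ x in α..y, v x y * (u δ * (-u' x) / u x ^ 2))
          = (∫ x in α..y, u x * (u δ * (-u' x) / u x ^ 2))
            - u y * ∫ x in α..y, u δ * (-u' x) / u x ^ 2 := by
        rw [intervalIntegral.integral_congr hmeq1]
        simp only [sub_mul]
        rw [intervalIntegral.integral_sub (hintud α y le_rfl hyα.le hyδ)
          ((hintd α y le_rfl hyα.le hyδ).const_mul (u y)),
          intervalIntegral.integral_const_mul]
      have hI2 : (∫ x in y..δ, v x y * (u δ * (-u' x) / u x ^ 2))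
          = ∫ x in y..δ, u x * (u δ * (-u' x) / u x ^ 2) := by
        apply intervalIntegral.integral_congr_ae
        exact Filter.Eventually.of_forall (fun x hx => hmeq2 hx)
      rw [hv0, ← hsplit, hI1, hI2, key1 α y le_rfl hyα.le hyδ,
        key2 α y le_rfl hyα.le hyδ, key2 y δ hyα.le hyδ le_rfl, hu0α, hloguδ, hδe]
      apply ge_of_eq
      field_simp
      ring
  · -- δ < y
    have hyβ : y ∈ Set.Icc α β := ⟨(hαδ.trans hyδ).le, hy.2⟩
    have huyδ : u y ≤ u δ := (hdec ⟨hαδ.le, hδβ.le⟩ hyβ hyδ).le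
    have hv0 : v 0 y = u 0 - u y := by
      rw [hv, if_neg (by linarith [hy.1] : ¬ (0:ℝ) > y)]
    have hmeq : Set.EqOn (fun x => v x y * (u δ * (-u' x) / u x ^ 2))
        (fun x => (u x - u y) * (u δ * (-u' x) / u x ^ 2)) (Set.uIcc α δ) := by
      intro x hx
      rw [Set.uIcc_of_le hαδ.le] at hx
      simp only [hv, if_neg (not_lt.2 (hx.2.trans hyδ.le))]
    have hI : (∫ x in α..δ, v x y * (u δ * (-u' x) / u x ^ 2))
        = (∫ x in α..δ, u x * (u δ * (-u' x) / u x ^ 2))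
          - u y * ∫ x in α..δ, u δ * (-u' x) / u x ^ 2 := by
      rw [intervalIntegral.integral_congr hmeq]
      simp only [sub_mul]
      rw [intervalIntegral.integral_sub (hintud α δ le_rfl hαδ.le le_rfl)
        ((hintd α δ le_rfl hαδ.le le_rfl).const_mul (u y)),
        intervalIntegral.integral_const_mul]
    rw [hδe] at huyδ
    rw [hv0, hI, key1 α δ le_rfl hαδ.le le_rfl, key2 α δ le_rfl hαδ.le le_rfl,
      hu0α, hloguδ, hδe]
    have heq : u 0 / Real.exp 1 / u 0 * (u 0 - u y) +
        ((u 0 / Real.exp 1 * Real.log (u 0) -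
          u 0 / Real.exp 1 * (Real.log (u 0) - 1)) -
         u y * (u 0 / Real.exp 1 / (u 0 / Real.exp 1) - u 0 / Real.exp 1 / u 0))
        = 2 * (u 0 / Real.exp 1) - u y := by
      field_simp
      ring
    rw [heq]
    linarith
end

section
/- In the binary buyer-type model with valuations b₁ < b₂, b₂ - b₁ = 1, prior probability μ ∈ (0,1) of the low type b₁, and seller valuation s ≥ 0, the optimal buyer surplus is: U*(s) = 1 - μ if s < b₂ - 1/μ; U*(s) = (b₁ - s)·μ if b₂ - 1/μ ≤ s ≤ b₁; and U*(s) = 0 if s > b₁. -/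
/-- Optimal buyer surplus (total welfare minus monopoly profit, per
Bergemann–Brooks–Morris) in the binary-type model with b₂ - b₁ = 1, prior μ on
the low type b₁, and seller valuation s. -/
noncomputable def binaryUstar (b₁ b₂ μ s : ℝ) : ℝ :=
  μ * max (b₁ - s) 0 + (1 - μ) * max (b₂ - s) 0 -
    max (max (b₁ - s) ((b₂ - s) * (1 - μ))) 0

/-- Closed form of the optimal buyer surplus in the binary buyer-type model:
U*(s) = 1 - μ for s < b₂ - 1/μ; U*(s) = (b₁ - s)·μ for b₂ - 1/μ ≤ s ≤ b₁;
U*(s) = 0 for s > b₁. -/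
theorem stmt_6 (b₁ b₂ μ s : ℝ) (hb : b₂ = b₁ + 1) (hb₁ : 0 < b₁)
    (hμ : μ ∈ Set.Ioo (0:ℝ) 1) (hs : 0 ≤ s) :
    (s < b₂ - 1 / μ → binaryUstar b₁ b₂ μ s = 1 - μ) ∧
    (b₂ - 1 / μ ≤ s → s ≤ b₁ → binaryUstar b₁ b₂ μ s = (b₁ - s) * μ) ∧
    (b₁ < s → binaryUstar b₁ b₂ μ s = 0) := by
  obtain ⟨hμ0, hμ1⟩ := hμ
  have hinv : μ * (1 / μ) = 1 := by field_simp
  unfold binaryUstar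
  refine ⟨?_, ?_, ?_⟩
  · intro h
    have h2 : 1 / μ < b₂ - s := by linarith
    have h1 : 1 < μ * (b₂ - s) := by
      calc 1 = μ * (1 / μ) := hinv.symm
        _ < μ * (b₂ - s) := by exact mul_lt_mul_of_pos_left h2 hμ0
    have hx : 0 ≤ b₁ - s := by nlinarith
    rw [max_eq_left hx, max_eq_left (by nlinarith : 0 ≤ b₂ - s),
      max_eq_left (by nlinarith : (b₂ - s) * (1 - μ) ≤ b₁ - s), max_eq_left hx]
    subst hb; ring
  · intro h1 h2
    have h3 : b₂ - s ≤ 1 / μ := by linarith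
    have h4 : μ * (b₂ - s) ≤ 1 := by
      calc μ * (b₂ - s) ≤ μ * (1 / μ) := mul_le_mul_of_nonneg_left h3 hμ0.le
        _ = 1 := hinv
    have hx : 0 ≤ b₁ - s := by linarith
    rw [max_eq_left hx, max_eq_left (by linarith : (0:ℝ) ≤ b₂ - s),
      max_eq_right (by nlinarith : b₁ - s ≤ (b₂ - s) * (1 - μ)),
      max_eq_left (by nlinarith : (0:ℝ) ≤ (b₂ - s) * (1 - μ))]
    ring
  · intro h
    have hx : b₁ - s ≤ 0 := by linarith
    rw [max_eq_right hx]
    rcases le_or_gt (b₂ - s) 0 with h2 | h2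
    · rw [max_eq_right h2,
        max_eq_right (max_le hx (by nlinarith : (b₂ - s) * (1 - μ) ≤ 0))]
      ring
    · rw [max_eq_left h2.le,
        max_eq_right (by nlinarith : b₁ - s ≤ (b₂ - s) * (1 - μ)),
        max_eq_left (by nlinarith : (0:ℝ) ≤ (b₂ - s) * (1 - μ))]
      ring
end

section
/- Let u_β : [0,1] → ℝ be defined by u_β(p) = 0 for p < 1/b₂, u_β(p) = (b₁-β)·p for 1/b₂ ≤ p ≤ 1/(b₂-β), and u_β(p) = 1-p for p > 1/(b₂-β), where b₂ = b₁ + 1 and 0 < β < b₁. Then the concavification of u_β (the pointwise smallest concave function dominating u_β on [0,1]) is cav(u_β)(p) = (b₁-β)·p for p ≤ 1/(b₂-β) and cav(u_β)(p) = 1-p for p ≥ 1/(b₂-β). -/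
lemma affine_concaveOn (a b : ℝ) (s : Set ℝ) (hs : Convex ℝ s) :
    ConcaveOn ℝ s (fun p => a * p + b) := by
  refine ⟨hs, ?_⟩
  intro x _ y _ u v hu hv huv
  simp only [smul_eq_mul]
  have : u * (a * x + b) + v * (a * y + b) = a * (u * x + v * y) + b := by
    linear_combination b * huv
  linarith

/-- The concavification of the piecewise indirect utility u_β on [0,1] is the
piecewise-linear function (b₁-β)·p for p ≤ 1/(b₂-β) and 1-p beyond: it is
concave, dominates u_β, and is pointwise below every concave dominator. -/
theorem stmt_9 (b₁ b₂ β : ℝ) (u c : ℝ → ℝ) (hb : b₂ = b₁ + 1) (hb₁ : 0 < b₁)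
    (hβ : 0 < β) (hβhi : β < b₁)
    (hu : ∀ p, u p = if p < 1 / b₂ then 0
      else if p ≤ 1 / (b₂ - β) then (b₁ - β) * p else 1 - p)
    (hc : ∀ p, c p = if p ≤ 1 / (b₂ - β) then (b₁ - β) * p else 1 - p) :
    ConcaveOn ℝ (Set.Icc 0 1) c ∧
    (∀ p ∈ Set.Icc (0:ℝ) 1, u p ≤ c p) ∧
    (∀ g : ℝ → ℝ, ConcaveOn ℝ (Set.Icc 0 1) g →
      (∀ p ∈ Set.Icc (0:ℝ) 1, u p ≤ g p) →
      ∀ p ∈ Set.Icc (0:ℝ) 1, c p ≤ g p) := by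
  have hd : (1:ℝ) < b₂ - β := by rw [hb]; linarith
  have hd0 : (0:ℝ) < b₂ - β := by linarith
  set t : ℝ := 1 / (b₂ - β) with htdef
  have ht0 : 0 < t := by positivity
  have ht1 : t < 1 := by
    rw [htdef, div_lt_one hd0]; linarith
  have htval : (b₂ - β) * t = 1 := by
    rw [htdef]; field_simp
  have hb2 : (1:ℝ) < b₂ := by rw [hb]; linarith
  have h1b2 : 1 / b₂ ≤ t := by
    rw [htdef]
    apply one_div_le_one_div_of_le hd0
    linarith
  -- c equals min of two affine functions everywhere
  have hcmin : ∀ p, c p = min ((b₁ - β) * p + 0) ((-1) * p + 1) := by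
    intro p
    rw [hc]
    have hiff : (b₁ - β) * p ≤ 1 - p ↔ p ≤ t := by
      rw [htdef, le_div_iff₀ hd0]
      constructor <;> intro h <;> nlinarith
    by_cases h : p ≤ t
    · rw [if_pos h, min_eq_left]; · ring
      have := hiff.2 h; linarith
    · rw [if_neg h, min_eq_right]; · ring
      have : ¬ ((b₁ - β) * p ≤ 1 - p) := fun hh => h (hiff.1 hh)
      linarith
  have hut : u t = (b₁ - β) * t := by
    rw [hu, if_neg (by linarith), if_pos le_rfl]
  have hu0 : u 0 = 0 := by
    rw [hu, if_pos (by positivity)]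
  have hu1 : u 1 = 0 := by
    rw [hu, if_neg (by push_neg; rw [div_le_one (by linarith)]; linarith),
      if_neg (by linarith)]
    ring
  have hbt : (b₁ - β) * t = 1 - t := by
    have : b₁ - β = (b₂ - β) - 1 := by rw [hb]; ring
    rw [this]; nlinarith
  refine ⟨?_, ?_, ?_⟩
  · have := (affine_concaveOn (b₁ - β) 0 _ (convex_Icc (0:ℝ) 1)).inf
      (affine_concaveOn (-1) 1 _ (convex_Icc (0:ℝ) 1))
    refine this.congr (fun p _ => ?_)
    rw [hcmin p]
    rfl
  · intro p hp
    obtain ⟨hp0, hp1⟩ := hp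
    rw [hu, hc]
    by_cases h1 : p < 1 / b₂
    · rw [if_pos h1]
      by_cases h2 : p ≤ t
      · rw [if_pos h2]; nlinarith
      · rw [if_neg h2]; linarith
    · rw [if_neg h1]
  · intro g hg hgu p hp
    obtain ⟨hp0, hp1⟩ := hp
    have hgt : (b₁ - β) * t ≤ g t := by
      have := hgu t ⟨le_of_lt ht0, le_of_lt ht1⟩; rwa [hut] at this
    have hg0 : 0 ≤ g 0 := by
      have := hgu 0 ⟨le_rfl, zero_le_one⟩; rwa [hu0] at this
    have hg1 : 0 ≤ g 1 := by
      have := hgu 1 ⟨zero_le_one, le_rfl⟩; rwa [hu1] at this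
    rw [hc]
    by_cases h : p ≤ t
    · rw [if_pos h]
      have ha : 0 ≤ 1 - p / t := by
        rw [sub_nonneg, div_le_one ht0]; exact h
      have hbnn : 0 ≤ p / t := by positivity
      have key := hg.2 (x := 0) ⟨le_rfl, zero_le_one⟩
        (y := t) ⟨le_of_lt ht0, le_of_lt ht1⟩ ha hbnn (by ring)
      simp only [smul_eq_mul, mul_zero, zero_add] at key
      have hpt : p / t * t = p := div_mul_cancel₀ p (ne_of_gt ht0)
      rw [hpt] at key
      have : p / t * ((b₁ - β) * t) = (b₁ - β) * p := by
        field_simp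
      nlinarith [mul_le_mul_of_nonneg_left hgt hbnn]
    · rw [if_neg h]
      push_neg at h
      have h1t : 0 < 1 - t := by linarith
      have h1t' : (1:ℝ) - t ≠ 0 := ne_of_gt h1t
      have ha : 0 ≤ (1 - p) / (1 - t) := by
        apply div_nonneg <;> linarith
      have hbnn : 0 ≤ (p - t) / (1 - t) := by
        apply div_nonneg <;> linarith
      have habs : (1 - p) / (1 - t) + (p - t) / (1 - t) = 1 := by
        field_simp; ring
      have key := hg.2 (x := t) ⟨le_of_lt ht0, le_of_lt ht1⟩
        (y := 1) ⟨zero_le_one, le_rfl⟩ ha hbnn habs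
      simp only [smul_eq_mul, mul_one] at key
      have hcomb : (1 - p) / (1 - t) * t + (p - t) / (1 - t) = p := by
        field_simp; ring
      rw [hcomb] at key
      have h2 : (1 - p) / (1 - t) * ((b₁ - β) * t) = 1 - p := by
        rw [hbt]; field_simp
      nlinarith [mul_le_mul_of_nonneg_left hgt ha,
        mul_le_mul_of_nonneg_left hg1 hbnn]
end

section
/- In the binary-type model with b₂ - b₁ = 1 and prior μ ≤ 1/b₂ of the low type, let F_β be the distribution on [0,β] with CDF F_β(t) = (b₁-β)/(b₁-t) for b₂ - 1/μ ≤ β < b₁. Then the expected optimal surplus satisfies E_{s∼F_β}[U*(s)] = (b₁-β)·μ·(1 + ln(b₁/(b₁-β))), where U*(s) = (b₁-s)·μ for all s in the support of F_β. -/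
/-- Expected optimal surplus under the adversary distribution F_β in the case
μ ≤ 1/b₂ (where U*(s) = (b₁ - s)·μ on the support of F_β): atom of mass
(b₁-β)/b₁ at 0 plus density (b₁-β)/(b₁-t)² on (0,β]. -/
theorem stmt_10 (b₁ b₂ β μ : ℝ) (hb : b₂ = b₁ + 1) (hb₁ : 0 < b₁)
    (hμ0 : 0 < μ) (hμ : μ ≤ 1 / b₂) (hβlo : b₂ - 1 / μ ≤ β) (hβ : 0 ≤ β)
    (hβhi : β < b₁) :
    ((b₁ - β) / b₁) * ((b₁ - 0) * μ) +
      (∫ s in (0:ℝ)..β, ((b₁ - s) * μ) * ((b₁ - β) / (b₁ - s) ^ 2)) =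
    (b₁ - β) * μ * (1 + Real.log (b₁ / (b₁ - β))) := by
  have hβb : b₁ - β > 0 := by linarith
  have h1 : (∫ s in (0:ℝ)..β, ((b₁ - s) * μ) * ((b₁ - β) / (b₁ - s) ^ 2))
      = μ * (b₁ - β) * ∫ s in (0:ℝ)..β, (b₁ - s)⁻¹ := by
    rw [← intervalIntegral.integral_const_mul]
    apply intervalIntegral.integral_congr
    intro s hs
    rw [Set.uIcc_of_le hβ] at hs
    have hbs : b₁ - s > 0 := by
      have := hs.2; linarith
    field_simp
  have h2 : (∫ s in (0:ℝ)..β, (b₁ - s)⁻¹) = Real.log (b₁ / (b₁ - β)) := by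
    have := intervalIntegral.integral_comp_sub_left (a := (0:ℝ)) (b := β)
      (fun x => x⁻¹) b₁
    rw [this, sub_zero]
    rw [integral_inv_of_pos hβb hb₁, Real.log_div (ne_of_gt hb₁) (ne_of_gt hβb)]
  rw [h1, h2]
  field_simp
  ring
end

section
/- In the binary-type model with b₂ - b₁ = 1 and prior μ > 1/b₂, let F_β be as above with b₂ - 1/μ ≤ β < b₁, and U*(s) = 1-μ for s ≤ b₂ - 1/μ and (b₁-s)·μ otherwise. Then E_{s∼F_β}[U*(s)] = μ(b₁-β) + μ(b₁-β)·ln((1-μ)/(μ(b₁-β))). -/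
/-- Expected optimal surplus under the adversary distribution F_β in the case
μ > 1/b₂: U*(s) = 1-μ on [0, b₂ - 1/μ] (total F_β-mass F_β(b₂ - 1/μ)) and
U*(s) = (b₁-s)·μ above, with density (b₁-β)/(b₁-t)². -/
theorem stmt_11 (b₁ b₂ β μ : ℝ) (hb : b₂ = b₁ + 1) (hb₁ : 0 < b₁)
    (hμ : 1 / b₂ < μ) (hμ1 : μ < 1) (hβlo : b₂ - 1 / μ ≤ β) (hβhi : β < b₁) :
    (1 - μ) * ((b₁ - β) / (b₁ - (b₂ - 1 / μ))) +
      (∫ s in (b₂ - 1 / μ)..β, ((b₁ - s) * μ) * ((b₁ - β) / (b₁ - s) ^ 2)) =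
    μ * (b₁ - β) + μ * (b₁ - β) * Real.log ((1 - μ) / (μ * (b₁ - β))) := by
  have hb₂ : (0:ℝ) < b₂ := by linarith
  have hμ0 : 0 < μ := lt_trans (by positivity) hμ
  set a := b₂ - 1 / μ with ha
  have hba : b₁ - a = (1 - μ) / μ := by
    field_simp [ha, hb]
    rw [ha, hb]; linear_combination inv_mul_cancel₀ hμ0.ne'
  have hμ1' : (0:ℝ) < 1 - μ := by linarith
  have hbapos : 0 < b₁ - a := by
    rw [hba]; positivity
  have hbβ : 0 < b₁ - β := by linarith
  -- rewrite the integrand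
  have hcong : ∀ s ∈ Set.uIcc a β, ((b₁ - s) * μ) * ((b₁ - β) / (b₁ - s) ^ 2)
      = μ * (b₁ - β) * (1 / (b₁ - s)) := by
    intro s hs
    rw [Set.uIcc_of_le hβlo] at hs
    have : 0 < b₁ - s := by linarith [hs.2]
    field_simp
  rw [intervalIntegral.integral_congr hcong]
  have hderiv : ∀ s ∈ Set.uIcc a β,
      HasDerivAt (fun t => -(μ * (b₁ - β)) * Real.log (b₁ - t))
        (μ * (b₁ - β) * (1 / (b₁ - s))) s := by
    intro s hs
    rw [Set.uIcc_of_le hβlo] at hs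
    have hpos : 0 < b₁ - s := by linarith [hs.2]
    have h1 : HasDerivAt (fun t : ℝ => b₁ - t) (-1) s := by
      simpa using (hasDerivAt_id s).const_sub b₁
    have h2 : HasDerivAt (fun t => Real.log (b₁ - t)) (-1 / (b₁ - s)) s := by
      have := (Real.hasDerivAt_log hpos.ne').comp s h1
      exact this.congr_deriv (by ring)
    have := h2.const_mul (-(μ * (b₁ - β)))
    exact this.congr_deriv (by ring)
  have hcont : IntervalIntegrable (fun s => μ * (b₁ - β) * (1 / (b₁ - s)))
      MeasureTheory.volume a β := by
    apply ContinuousOn.intervalIntegrable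
    apply ContinuousOn.mul continuousOn_const
    apply ContinuousOn.div continuousOn_const (by fun_prop)
    intro s hs
    rw [Set.uIcc_of_le hβlo] at hs
    have : 0 < b₁ - s := by linarith [hs.2]
    exact this.ne'
  rw [intervalIntegral.integral_eq_sub_of_hasDerivAt hderiv hcont]
  have hlog : Real.log (b₁ - a) - Real.log (b₁ - β)
      = Real.log ((1 - μ) / (μ * (b₁ - β))) := by
    rw [← Real.log_div hbapos.ne' hbβ.ne', hba]
    congr 1
    field_simp
  have hfirst : (1 - μ) * ((b₁ - β) / (b₁ - a)) = μ * (b₁ - β) := by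
    rw [hba]; field_simp
  rw [hfirst]
  linear_combination (μ * (b₁ - β)) * hlog
end

section
/- In the binary-type model with b₂ - b₁ = 1 and prior μ of the low type, the regret of the adversary's strategy F_β (defined as E_{s∼F_β}[U*(s)] - cav(u_β)(μ)) equals μ(b₁-β)·ln(b₁/(b₁-β)) when μ ≤ 1/b₂, and μ(b₁-β)·ln((1-μ)/(μ(b₁-β))) when μ > 1/b₂. Maximizing over β ∈ [b₂ - 1/μ, b₁): the optimal β* is b₁(1 - 1/e) in the first case and b₁ - (1-μ)/(e·μ) in the second, and the resulting regret is b₁μ/e in the first case and (1-μ)/e in the second; in both cases this equals U*(0)/e. -/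
/-- Regret of the adversary strategy F_β: expected optimal surplus
E_{s∼F_β}[U*(s)] minus the designer's best reply cav(u_β)(μ) = (b₁-β)·μ. -/
noncomputable def FbetaRegret (b₁ b₂ μ β : ℝ) : ℝ :=
  (if μ ≤ 1 / b₂ then
      ((b₁ - β) / b₁) * (b₁ * μ) +
        ∫ s in (0:ℝ)..β, ((b₁ - s) * μ) * ((b₁ - β) / (b₁ - s) ^ 2)
    else
      (1 - μ) * ((b₁ - β) / (b₁ - (b₂ - 1 / μ))) +
        ∫ s in (b₂ - 1 / μ)..β, ((b₁ - s) * μ) * ((b₁ - β) / (b₁ - s) ^ 2))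
  - (b₁ - β) * μ

lemma integral_aux (b₁ μ β a : ℝ) (ha : a ≤ β) (hβ : β < b₁) :
    ∫ s in a..β, ((b₁ - s) * μ) * ((b₁ - β) / (b₁ - s) ^ 2)
      = μ * (b₁ - β) * (Real.log (b₁ - a) - Real.log (b₁ - β)) := by
  have huIcc : Set.uIcc a β = Set.Icc a β := Set.uIcc_of_le ha
  have hpos : ∀ s ∈ Set.uIcc a β, 0 < b₁ - s := by
    intro s hs
    rw [huIcc] at hs
    linarith [hs.2]
  have hcong : Set.EqOn (fun s => ((b₁ - s) * μ) * ((b₁ - β) / (b₁ - s) ^ 2))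
      (fun s => μ * (b₁ - β) * (b₁ - s)⁻¹) (Set.uIcc a β) := by
    intro s hs
    have h := (hpos s hs).ne'
    field_simp
  rw [intervalIntegral.integral_congr hcong]
  rw [intervalIntegral.integral_const_mul]
  have hderiv : ∀ s ∈ Set.uIcc a β,
      HasDerivAt (fun t => -Real.log (b₁ - t)) (b₁ - s)⁻¹ s := by
    intro s hs
    have h1 : HasDerivAt (fun t : ℝ => b₁ - t) (-1) s := by
      simpa using (hasDerivAt_id s).const_sub b₁
    have h2 := (h1.log (hpos s hs).ne').neg
    have h3 : (b₁ - s)⁻¹ = -(-1 / (b₁ - s)) := by ring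
    rw [h3]
    exact h2
  have hint : IntervalIntegrable (fun s => (b₁ - s)⁻¹) MeasureTheory.volume a β := by
    apply ContinuousOn.intervalIntegrable
    apply ContinuousOn.inv₀
    · exact (continuous_const.sub continuous_id).continuousOn
    · intro s hs; exact (hpos s hs).ne'
  rw [intervalIntegral.integral_eq_sub_of_hasDerivAt hderiv hint]
  ring

lemma max_aux {x c : ℝ} (hx : 0 < x) (hc : 0 < c) :
    x * Real.log (c / x) ≤ c / Real.exp 1 := by
  have he : (0:ℝ) < Real.exp 1 := Real.exp_pos 1
  have h := Real.log_le_sub_one_of_pos (show (0:ℝ) < c / (Real.exp 1 * x) by positivity)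
  have hlog : Real.log (c / x) = Real.log (c / (Real.exp 1 * x)) + 1 := by
    rw [Real.log_div hc.ne' hx.ne', Real.log_div hc.ne' (by positivity),
      Real.log_mul he.ne' hx.ne', Real.log_exp]
    ring
  have key : x * Real.log (c / x) ≤ x * (c / (Real.exp 1 * x)) := by
    rw [hlog]
    have := mul_le_mul_of_nonneg_left h hx.le
    nlinarith
  calc x * Real.log (c / x) ≤ x * (c / (Real.exp 1 * x)) := key
    _ = c / Real.exp 1 := by field_simp

lemma max_eq_aux {c : ℝ} (hc : 0 < c) :
    (c / Real.exp 1) * Real.log (c / (c / Real.exp 1)) = c / Real.exp 1 := by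
  have he : (0:ℝ) < Real.exp 1 := Real.exp_pos 1
  have h : c / (c / Real.exp 1) = Real.exp 1 := by field_simp
  rw [h, Real.log_exp, mul_one]

lemma regret_eq (b₁ b₂ μ : ℝ) (hb : b₂ = b₁ + 1) (hb₁ : 0 < b₁)
    (hμ : μ ∈ Set.Ioo (0:ℝ) 1) (β : ℝ)
    (h1 : max (b₂ - 1 / μ) 0 ≤ β) (h2 : β < b₁) :
    FbetaRegret b₁ b₂ μ β =
      if μ ≤ 1 / b₂ then μ * (b₁ - β) * Real.log (b₁ / (b₁ - β))
      else μ * (b₁ - β) * Real.log ((1 - μ) / (μ * (b₁ - β))) := by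
  obtain ⟨hμ0, hμ1⟩ := hμ
  have hβpos : 0 < b₁ - β := by linarith
  unfold FbetaRegret
  by_cases hcase : μ ≤ 1 / b₂
  · rw [if_pos hcase, if_pos hcase]
    have h0β : (0:ℝ) ≤ β := le_trans (le_max_right _ _) h1
    rw [integral_aux b₁ μ β 0 h0β h2]
    rw [Real.log_div hb₁.ne' hβpos.ne']
    field_simp
    ring
  · rw [if_neg hcase, if_neg hcase]
    push_neg at hcase
    have hb₂ : (0:ℝ) < b₂ := by linarith
    have hμb₂ : 1 / μ < b₂ := by
      rw [div_lt_iff₀ hμ0]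
      rw [div_lt_iff₀ hb₂] at hcase
      nlinarith
    have haβ : b₂ - 1 / μ ≤ β := le_trans (le_max_left _ _) h1
    rw [integral_aux b₁ μ β (b₂ - 1/μ) haβ h2]
    have hba : b₁ - (b₂ - 1/μ) = (1 - μ)/μ := by
      rw [hb]; field_simp; ring
    rw [hba]
    have h1μ : 0 < 1 - μ := by linarith
    rw [Real.log_div h1μ.ne' (by positivity : ((0:ℝ) < μ * (b₁ - β))).ne',
      Real.log_div h1μ.ne' hμ0.ne', Real.log_mul hμ0.ne' hβpos.ne']
    field_simp
    ring


/-- Closed form of the regret of F_β, the optimal choice β*, and the resulting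
maximal regret U*(0)/e. -/
theorem stmt_12 (b₁ b₂ μ : ℝ) (hb : b₂ = b₁ + 1) (hb₁ : 0 < b₁)
    (hμ : μ ∈ Set.Ioo (0:ℝ) 1) :
    (∀ β, max (b₂ - 1 / μ) 0 ≤ β → β < b₁ →
      FbetaRegret b₁ b₂ μ β =
        if μ ≤ 1 / b₂ then μ * (b₁ - β) * Real.log (b₁ / (b₁ - β))
        else μ * (b₁ - β) * Real.log ((1 - μ) / (μ * (b₁ - β)))) ∧
    (let βstar := if μ ≤ 1 / b₂ then b₁ * (1 - 1 / Real.exp 1)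
        else b₁ - (1 - μ) / (Real.exp 1 * μ);
      βstar ∈ Set.Ico (max (b₂ - 1 / μ) 0) b₁ ∧
      (∀ β, max (b₂ - 1 / μ) 0 ≤ β → β < b₁ →
        FbetaRegret b₁ b₂ μ β ≤ FbetaRegret b₁ b₂ μ βstar) ∧
      FbetaRegret b₁ b₂ μ βstar =
        (if μ ≤ 1 / b₂ then b₁ * μ / Real.exp 1 else (1 - μ) / Real.exp 1) ∧
      FbetaRegret b₁ b₂ μ βstar = binaryUstar b₁ b₂ μ 0 / Real.exp 1) := by
  obtain ⟨hμ0, hμ1⟩ := hμ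
  have he : (0:ℝ) < Real.exp 1 := Real.exp_pos 1
  have he1 : (1:ℝ) ≤ Real.exp 1 := by
    have := Real.add_one_le_exp (1:ℝ); linarith
  have hb₂ : (0:ℝ) < b₂ := by linarith
  refine ⟨regret_eq b₁ b₂ μ hb hb₁ ⟨hμ0, hμ1⟩, ?_⟩
  intro βstar
  by_cases hcase : μ ≤ 1 / b₂
  · -- case μ ≤ 1/b₂
    have hβs : βstar = b₁ * (1 - 1 / Real.exp 1) := if_pos hcase
    have hx : b₁ - βstar = b₁ / Real.exp 1 := by rw [hβs]; field_simp; ring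
    have hxpos : 0 < b₁ - βstar := by rw [hx]; positivity
    have hmax0 : max (b₂ - 1/μ) 0 = 0 := by
      have h1 : b₂ ≤ 1/μ := by
        rw [le_div_iff₀ hμ0]
        rw [le_div_iff₀ hb₂] at hcase
        nlinarith
      exact max_eq_right (by linarith)
    have hβsnn : 0 ≤ βstar := by
      rw [hβs]
      have : 1/Real.exp 1 ≤ 1 := by
        rw [div_le_one he]; exact he1
      nlinarith
    have hβslt : βstar < b₁ := by linarith
    have hmem : max (b₂ - 1/μ) 0 ≤ βstar := by rw [hmax0]; exact hβsnn
    have hval : FbetaRegret b₁ b₂ μ βstar = b₁ * μ / Real.exp 1 := by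
      rw [regret_eq b₁ b₂ μ hb hb₁ ⟨hμ0, hμ1⟩ βstar hmem hβslt, if_pos hcase, hx]
      have := max_eq_aux hb₁
      rw [mul_assoc, this]
      ring
    have hUstar : binaryUstar b₁ b₂ μ 0 = b₁ * μ := by
      unfold binaryUstar
      have h1 : b₁ ≤ b₂ * (1 - μ) := by
        rw [le_div_iff₀ hb₂] at hcase
        nlinarith
      have h2 : (0:ℝ) ≤ b₂ * (1 - μ) := by nlinarith
      simp only [sub_zero]
      rw [max_eq_left hb₁.le, max_eq_left hb₂.le, max_eq_right h1, max_eq_left h2]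
      ring
    refine ⟨⟨hmem, hβslt⟩, ?_, ?_, ?_⟩
    · intro β h1 h2
      rw [regret_eq b₁ b₂ μ hb hb₁ ⟨hμ0, hμ1⟩ β h1 h2, if_pos hcase, hval]
      have hβpos : 0 < b₁ - β := by linarith
      have := max_aux hβpos hb₁
      rw [mul_assoc]
      calc μ * ((b₁ - β) * Real.log (b₁ / (b₁ - β))) ≤ μ * (b₁ / Real.exp 1) :=
        mul_le_mul_of_nonneg_left this hμ0.le
        _ = b₁ * μ / Real.exp 1 := by ring
    · rw [hval, if_pos hcase]
    · rw [hval, hUstar]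
  · -- case μ > 1/b₂
    push_neg at hcase
    have hμb₂ : 1 < b₂ * μ := by
      rw [div_lt_iff₀ hb₂] at hcase; linarith
    have h1μ : (0:ℝ) < 1 - μ := by linarith
    have hc : (0:ℝ) < (1 - μ) / μ := by positivity
    have hβs : βstar = b₁ - (1 - μ) / (Real.exp 1 * μ) := if_neg (not_le.mpr hcase)
    have hx : b₁ - βstar = ((1 - μ)/μ) / Real.exp 1 := by rw [hβs, div_div]; ring
    have hxpos : 0 < b₁ - βstar := by rw [hx]; positivity
    have hβslt : βstar < b₁ := by linarith
    have ha : b₂ - 1/μ = b₁ - (1 - μ)/μ := by rw [hb]; field_simp; ring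
    have hapos : 0 < b₂ - 1/μ := by
      rw [sub_pos, div_lt_iff₀ hμ0]; linarith
    have hmax : max (b₂ - 1/μ) 0 = b₂ - 1/μ := max_eq_left hapos.le
    have hmem : max (b₂ - 1/μ) 0 ≤ βstar := by
      rw [hmax, ha, hβs]
      have : (1 - μ) / (Real.exp 1 * μ) ≤ (1 - μ)/μ := by
        apply div_le_div_of_nonneg_left h1μ.le hμ0
        nlinarith
      linarith
    have hval : FbetaRegret b₁ b₂ μ βstar = (1 - μ) / Real.exp 1 := by
      rw [regret_eq b₁ b₂ μ hb hb₁ ⟨hμ0, hμ1⟩ βstar hmem hβslt,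
        if_neg (not_le.mpr hcase), hx]
      have harg : (1 - μ) / (μ * (((1 - μ)/μ) / Real.exp 1))
          = ((1 - μ)/μ) / (((1 - μ)/μ) / Real.exp 1) := by
        field_simp
      rw [harg]
      have := max_eq_aux hc
      rw [mul_assoc, this]
      field_simp
    have hUstar : binaryUstar b₁ b₂ μ 0 = 1 - μ := by
      unfold binaryUstar
      have h1 : b₂ * (1 - μ) ≤ b₁ := by nlinarith
      simp only [sub_zero]
      rw [max_eq_left hb₁.le, max_eq_left hb₂.le, max_eq_left h1, max_eq_left hb₁.le, hb]
      ring
    refine ⟨⟨hmem, hβslt⟩, ?_, ?_, ?_⟩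
    · intro β h1 h2
      rw [regret_eq b₁ b₂ μ hb hb₁ ⟨hμ0, hμ1⟩ β h1 h2, if_neg (not_le.mpr hcase), hval]
      have hβpos : 0 < b₁ - β := by linarith
      have harg : (1 - μ) / (μ * (b₁ - β)) = ((1 - μ)/μ) / (b₁ - β) := by
        field_simp
      rw [harg]
      have := max_aux hβpos hc
      rw [mul_assoc]
      calc μ * ((b₁ - β) * Real.log (((1 - μ)/μ) / (b₁ - β)))
          ≤ μ * (((1 - μ)/μ) / Real.exp 1) := mul_le_mul_of_nonneg_left this hμ0.le
        _ = (1 - μ) / Real.exp 1 := by field_simp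
    · rw [hval, if_neg (not_le.mpr hcase)]
    · rw [hval, hUstar]
end

section
/- Let b₁ < b₂ < ... < bₙ be positive reals, p ∈ Δ({b₁,...,bₙ}) a probability vector, and s_D ≥ 0. Suppose p is an equal-revenue segment with respect to s_D: for all i, j, (bᵢ - s_D)·Σ_{k≥i} pₖ = (bⱼ - s_D)·Σ_{k≥j} pₖ. Then for any seller valuation s: if s > s_D, the price bⱼ with j the maximal index in the support of p strictly dominates every price bᵢ with i < j in the support, i.e., (bᵢ - s)·Σ_{k≥i} pₖ < (bⱼ - s)·Σ_{k≥j} pₖ; and if s < s_D, the minimal supported price strictly dominates every higher supported price. -/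
open Finset in
private lemma Fmono {n : ℕ} (p : Fin n → ℝ) (hpnn : ∀ i, 0 ≤ p i)
    {i j : Fin n} (hij : i < j) (hpi : p i ≠ 0) :
    ∑ k ∈ Finset.Ici j, p k < ∑ k ∈ Finset.Ici i, p k := by
  have hpi' : 0 < p i := lt_of_le_of_ne (hpnn i) (Ne.symm hpi)
  refine Finset.sum_lt_sum_of_subset ?_ (Finset.mem_Ici.mpr le_rfl) ?_ hpi'
    (fun k _ _ => hpnn k)
  · exact Finset.Ici_subset_Ici.mpr (le_of_lt hij)
  · simp [Finset.mem_Ici, not_le, hij]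

open Finset in
/-- In an equal-revenue segment with respect to s_D, if s > s_D the maximal
supported price strictly dominates every lower supported price, and if s < s_D
the minimal supported price strictly dominates every higher supported price. -/
theorem stmt_14 (n : ℕ) (b p : Fin n → ℝ) (sD s : ℝ)
    (hbpos : ∀ i, 0 < b i) (hbmono : StrictMono b)
    (hpnn : ∀ i, 0 ≤ p i) (hpsum : ∑ i, p i = 1) (hsD : 0 ≤ sD)
    (heq : ∀ i j : Fin n,
      (b i - sD) * ∑ k ∈ Finset.Ici i, p k = (b j - sD) * ∑ k ∈ Finset.Ici j, p k) :
    (sD < s → ∀ j : Fin n, p j ≠ 0 → (∀ k, p k ≠ 0 → k ≤ j) →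
      ∀ i : Fin n, p i ≠ 0 → i < j →
        (b i - s) * ∑ k ∈ Finset.Ici i, p k < (b j - s) * ∑ k ∈ Finset.Ici j, p k) ∧
    (s < sD → ∀ j : Fin n, p j ≠ 0 → (∀ k, p k ≠ 0 → j ≤ k) →
      ∀ i : Fin n, p i ≠ 0 → j < i →
        (b i - s) * ∑ k ∈ Finset.Ici i, p k < (b j - s) * ∑ k ∈ Finset.Ici j, p k) := by
  constructor
  · intro hs j _ _ i hpi hij
    have hF := Fmono p hpnn hij hpi
    have hR := heq i j
    nlinarith [hF, hR, hs]
  · intro hs j hpj _ i _ hji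
    have hF := Fmono p hpnn hji hpj
    have hR := heq i j
    nlinarith [hF, hR, hs]
end

section
/- Generalized-regret zero-sum game: let 0 < α < β, u : [0,β] → ℝ≥0 continuously differentiable, constant on [0,α], strictly decreasing and positive on [α,β), and λ ∈ (0,1). Let δ_λ ∈ (α,β) satisfy u(δ_λ) = u(0)·e^{-(1-λ)/λ} (assume such δ_λ exists). Define g_λ(y) = -(λ/(1-λ))·u'(y)/u(y) on [α,δ_λ], zero elsewhere. Then g_λ is a probability density, and for the payoff v_λ(x,y) = λu(x) for x > y, λu(x) - (1-λ)u(y) for x ≤ y, every x ∈ [0,β] satisfies ∫ v_λ(x,y)·g_λ(y) dy ≤ λ·u(0)·e^{-(1-λ)/λ}. -/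
open MeasureTheory Set intervalIntegral

/-- If a function vanishes on `Ioo a b`, it is interval integrable on `[a,b]`
with integral zero (values at endpoints do not matter). -/
lemma stmt16_aux_zero (f : ℝ → ℝ) (a b : ℝ) (hab : a ≤ b)
    (h0 : ∀ y ∈ Set.Ioo a b, f y = 0) :
    IntervalIntegrable f volume a b ∧ (∫ y in a..b, f y) = 0 := by
  have hae : ∀ᵐ y ∂(volume : Measure ℝ), y ∈ Set.uIoc a b → f y = 0 := by
    rw [ae_iff]
    refine measure_mono_null (fun y hy => ?_) (Real.volume_singleton (a := b))
    simp only [Set.mem_setOf_eq] at hy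
    push_neg at hy
    rw [Set.uIoc_of_le hab] at hy
    exact Set.mem_singleton_iff.2
      (by by_contra hne; exact hy.2 (h0 y ⟨hy.1.1, lt_of_le_of_ne hy.1.2 hne⟩))
  have hr : ∀ᵐ y ∂(volume.restrict (Set.uIoc a b)), f y = 0 :=
    (ae_restrict_iff' measurableSet_uIoc).2 hae
  constructor
  · have hr2 : f =ᶠ[ae (volume.restrict (Set.uIoc a b))] (fun _ => (0:ℝ)) := hr
    exact (_root_.intervalIntegrable_const (c := (0:ℝ))).congr_ae hr2.symm
  · rw [intervalIntegral.integral_congr_ae (g := fun _ => (0:ℝ)) hae]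
    simp

/-- a.e. implication from pointwise implication with at most one exception. -/
lemma stmt16_ae_imp (f f2 : ℝ → ℝ) (p : ℝ) (S : Set ℝ)
    (h : ∀ y ∈ S, f y ≠ f2 y → y = p) :
    ∀ᵐ y ∂(volume : Measure ℝ), y ∈ S → f y = f2 y := by
  rw [ae_iff]
  refine measure_mono_null (fun y hy => ?_) (Real.volume_singleton (a := p))
  simp only [Set.mem_setOf_eq] at hy
  push_neg at hy
  exact Set.mem_singleton_iff.2 (h y hy.1 hy.2)

/-- The derivative of a function strictly decreasing on `[a,b]` is nonpositive on `[a,b)`. -/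
lemma stmt16_deriv_nonpos {u u' : ℝ → ℝ} {a b y : ℝ} (hy1 : a ≤ y) (hy2 : y < b)
    (hd : HasDerivAt u (u' y) y) (hdec : StrictAntiOn u (Set.Icc a b)) : u' y ≤ 0 := by
  have hslope := hasDerivAt_iff_tendsto_slope.1 hd
  have h2 : Filter.Tendsto (slope u y) (nhdsWithin y (Set.Ioi y)) (nhds (u' y)) :=
    hslope.mono_left (nhdsWithin_mono y
      (fun z hz => Set.mem_compl_singleton_iff.mpr (ne_of_gt hz)))
  refine le_of_tendsto h2 ?_
  filter_upwards [Ioo_mem_nhdsGT_of_mem ⟨le_refl y, hy2⟩] with z hz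
  rw [slope_def_field]
  apply div_nonpos_of_nonpos_of_nonneg
  · have := hdec ⟨hy1, hy2.le⟩ ⟨hy1.trans hz.1.le, hz.2.le⟩ hz.1
    linarith
  · linarith [hz.1]

/-- Generalized-regret zero-sum game: the density
g_λ(y) = -(λ/(1-λ))·u'(y)/u(y) on [α,δ_λ] is a probability density, and against
it every action x yields expected payoff at most λ·u(0)·e^{-(1-λ)/λ}, where
v_λ(x,y) = λu(x) for x > y and v_λ(x,y) = λu(x) - (1-λ)u(y) for x ≤ y. -/
theorem stmt_16 (α β δ lam : ℝ) (u u' g : ℝ → ℝ) (v : ℝ → ℝ → ℝ)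
    (hα : 0 < α) (hαβ : α < β) (hlam : lam ∈ Set.Ioo (0:ℝ) 1)
    (hderiv : ∀ y ∈ Set.Icc α β, HasDerivAt u (u' y) y)
    (hderivcont : ContinuousOn u' (Set.Icc α β))
    (hconst : ∀ x ∈ Set.Icc 0 α, u x = u 0)
    (hdec : StrictAntiOn u (Set.Icc α β))
    (hposu : ∀ x ∈ Set.Ico α β, 0 < u x)
    (hδ : δ ∈ Set.Ioo α β) (hδe : u δ = u 0 * Real.exp (-(1 - lam) / lam))
    (hg : ∀ y, g y = if y ∈ Set.Icc α δ then -(lam / (1 - lam)) * (u' y / u y) else 0)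
    (hv : ∀ x y, v x y = if x > y then lam * u x else lam * u x - (1 - lam) * u y) :
    ((∀ y, 0 ≤ g y) ∧ ∫ y in (0:ℝ)..β, g y = 1) ∧
    (∀ x ∈ Set.Icc (0:ℝ) β,
      (∫ y in (0:ℝ)..β, v x y * g y) ≤ lam * u 0 * Real.exp (-(1 - lam) / lam)) := by
  obtain ⟨hl0, hl1⟩ := hlam
  have h1l : 0 < 1 - lam := by linarith
  have h1l' : (1 : ℝ) - lam ≠ 0 := ne_of_gt h1l
  obtain ⟨hαδ, hδβ⟩ := hδ
  set c : ℝ := lam / (1 - lam) with hcdef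
  have hcpos : 0 < c := div_pos hl0 h1l
  have hc' : (1 - lam) * c = lam := by rw [hcdef]; field_simp
  have huα : u α = u 0 := hconst α ⟨hα.le, le_rfl⟩
  have hupos : ∀ y ∈ Set.Icc α δ, 0 < u y :=
    fun y hy => hposu y ⟨hy.1, lt_of_le_of_lt hy.2 hδβ⟩
  have hu0pos : 0 < u 0 := huα ▸ hupos α ⟨le_rfl, hαδ.le⟩
  have hsub : Set.Icc α δ ⊆ Set.Icc α β := Set.Icc_subset_Icc le_rfl hδβ.le
  -- nonnegativity of g
  have hgnn : ∀ y, 0 ≤ g y := by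
    intro y
    rw [hg y]
    split_ifs with hy
    · have h1 : u' y ≤ 0 :=
        stmt16_deriv_nonpos hy.1 (lt_of_le_of_lt hy.2 hδβ) (hderiv y (hsub hy)) hdec
      have h2 : 0 < u y := hupos y hy
      have h3 : u' y / u y ≤ 0 := div_nonpos_of_nonpos_of_nonneg h1 h2.le
      nlinarith
    · exact le_rfl
  -- continuity facts
  have hucont : ContinuousOn u (Set.Icc α β) :=
    fun y hy => ((hderiv y hy).continuousAt).continuousWithinAt
  have hFcont : ContinuousOn (fun y => -c * (u' y / u y)) (Set.Icc α δ) :=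
    continuousOn_const.mul
      (ContinuousOn.div (hderivcont.mono hsub) (hucont.mono hsub)
        (fun y hy => (hupos y hy).ne'))
  have hgcont : ContinuousOn g (Set.Icc α δ) :=
    hFcont.congr (fun y hy => by rw [hg y, if_pos hy, hcdef])
  have hugcont : ContinuousOn (fun y => u y * g y) (Set.Icc α δ) :=
    (hucont.mono hsub).mul hgcont
  -- FTC computations
  have hFTC1 : ∀ a b : ℝ, α ≤ a → a ≤ b → b ≤ δ →
      (∫ y in a..b, g y) = -c * (Real.log (u b) - Real.log (u a)) := by
    intro a b ha hab hb
    have hsub2 : Set.uIcc a b ⊆ Set.Icc α δ := by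
      rw [Set.uIcc_of_le hab]; exact Set.Icc_subset_Icc ha hb
    have heq : Set.EqOn g (fun y => -c * (u' y / u y)) (Set.uIcc a b) :=
      fun y hy => by rw [hg y, if_pos (hsub2 hy), hcdef]
    rw [intervalIntegral.integral_congr heq,
      intervalIntegral.integral_eq_sub_of_hasDerivAt
        (f := fun z => -c * Real.log (u z))
        (fun y hy => ((hderiv y (hsub (hsub2 hy))).log
          (hupos y (hsub2 hy)).ne').const_mul (-c))
        ((hFcont.mono hsub2).intervalIntegrable)]
    ring
  have hFTC2 : ∀ a b : ℝ, α ≤ a → a ≤ b → b ≤ δ →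
      (∫ y in a..b, u y * g y) = -c * (u b - u a) := by
    intro a b ha hab hb
    have hsub2 : Set.uIcc a b ⊆ Set.Icc α δ := by
      rw [Set.uIcc_of_le hab]; exact Set.Icc_subset_Icc ha hb
    have heq : Set.EqOn (fun y => u y * g y) (fun y => -c * u' y) (Set.uIcc a b) := by
      intro y hy
      have h0 : u y ≠ 0 := (hupos y (hsub2 hy)).ne'
      simp only [hg y, if_pos (hsub2 hy), hcdef]
      field_simp
    rw [intervalIntegral.integral_congr heq,
      intervalIntegral.integral_eq_sub_of_hasDerivAt
        (f := fun z => -c * u z)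
        (fun y hy => (hderiv y (hsub (hsub2 hy))).const_mul (-c))
        ((continuousOn_const.mul
          (hderivcont.mono (hsub2.trans hsub))).intervalIntegrable)]
    ring
  -- total mass of g on [α,δ]
  have hlog : Real.log (u δ) - Real.log (u α) = -(1 - lam) / lam := by
    rw [hδe, huα, Real.log_mul hu0pos.ne' (Real.exp_pos _).ne', Real.log_exp]
    ring
  have hg_total : (∫ y in α..δ, g y) = 1 := by
    rw [hFTC1 α δ le_rfl hαδ.le le_rfl, hlog, hcdef]
    field_simp
  have hIg : IntervalIntegrable g volume α δ :=
    (hgcont.mono (by rw [Set.uIcc_of_le hαδ.le])).intervalIntegrable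
  -- zero pieces for g
  obtain ⟨hIL, hL0⟩ := stmt16_aux_zero g 0 α hα.le
    (fun y hy => by rw [hg y, if_neg (fun h => absurd h.1 (not_le.2 hy.2))])
  obtain ⟨hIR, hR0⟩ := stmt16_aux_zero g δ β hδβ.le
    (fun y hy => by rw [hg y, if_neg (fun h => absurd h.2 (not_le.2 hy.1))])
  have hg_int01 : (∫ y in (0:ℝ)..β, g y) = 1 := by
    rw [← intervalIntegral.integral_add_adjacent_intervals (hIL.trans hIg) hIR,
      ← intervalIntegral.integral_add_adjacent_intervals hIL hIg]
    rw [hL0, hR0, hg_total]; ring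
  refine ⟨⟨hgnn, hg_int01⟩, ?_⟩
  -- payoff bound
  intro x hx
  have hgz : ∀ y, y ∉ Set.Icc α δ → g y = 0 := fun y hy => by rw [hg y, if_neg hy]
  obtain ⟨hIL', hL0'⟩ := stmt16_aux_zero (fun y => v x y * g y) 0 α hα.le
    (fun y hy => by show v x y * g y = 0; rw [hgz y (fun h => absurd h.1 (not_le.2 hy.2)), mul_zero])
  obtain ⟨hIR', hR0'⟩ := stmt16_aux_zero (fun y => v x y * g y) δ β hδβ.le
    (fun y hy => by show v x y * g y = 0; rw [hgz y (fun h => absurd h.2 (not_le.2 hy.1)), mul_zero])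
  -- it suffices to handle the middle piece
  have hRHS : lam * u δ = lam * u 0 * Real.exp (-(1 - lam) / lam) := by
    rw [hδe]; ring
  rcases le_or_gt x δ with hxδ | hxδ
  · -- x ≤ δ : value is exactly lam * u δ
    set m : ℝ := max α x with hm
    have hm1 : α ≤ m := le_max_left _ _
    have hm2 : m ≤ δ := max_le hαδ.le hxδ
    have hxm : x ≤ m := le_max_right _ _
    have hum : u m = u x := by
      rcases le_total α x with h' | h'
      · rw [hm, max_eq_right h']
      · rw [hm, max_eq_left h', huα, hconst x ⟨hx.1, h'⟩]
    have hIgαm : IntervalIntegrable g volume α m :=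
      hIg.mono_set (by
        rw [Set.uIcc_of_le hm1, Set.uIcc_of_le hαδ.le]
        exact Set.Icc_subset_Icc le_rfl hm2)
    have hIgmδ : IntervalIntegrable g volume m δ :=
      hIg.mono_set (by
        rw [Set.uIcc_of_le hm2, Set.uIcc_of_le hαδ.le]
        exact Set.Icc_subset_Icc hm1 le_rfl)
    -- on (α, m), a.e. v x y = lam * u x
    have haem : ∀ᵐ y ∂(volume : Measure ℝ), y ∈ Set.uIoc α m →
        v x y * g y = lam * u x * g y := by
      apply stmt16_ae_imp _ _ m
      intro y hy hne
      rw [Set.uIoc_of_le hm1] at hy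
      by_contra hym
      have hylt : y < m := lt_of_le_of_ne hy.2 hym
      have hyx : y < x := by
        rcases le_total α x with h' | h'
        · rwa [hm, max_eq_right h'] at hylt
        · rw [hm, max_eq_left h'] at hylt; exact absurd hy.1 (not_lt.2 hylt.le)
      exact hne (by rw [hv x y, if_pos hyx])
    have hr2 : (fun y => v x y * g y) =ᶠ[ae (volume.restrict (Set.uIoc α m))]
        (fun y => lam * u x * g y) := (ae_restrict_iff' measurableSet_uIoc).2 haem
    have hImid1 : IntervalIntegrable (fun y => v x y * g y) volume α m :=
      (hIgαm.const_mul (lam * u x)).congr_ae hr2.symm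
    have hval1 : (∫ y in α..m, v x y * g y) = lam * u x * ∫ y in α..m, g y := by
      rw [intervalIntegral.integral_congr_ae haem, intervalIntegral.integral_const_mul]
    -- on [m, δ], v x y = lam * u x - (1-lam) * u y
    have heq2 : Set.EqOn (fun y => v x y * g y)
        (fun y => lam * u x * g y - (1 - lam) * (u y * g y)) (Set.Icc m δ) := by
      intro y hy
      simp only
      rw [hv x y, if_neg (not_lt.2 (hxm.trans hy.1))]
      ring
    have hcont2 : ContinuousOn
        (fun y => lam * u x * g y - (1 - lam) * (u y * g y)) (Set.Icc m δ) := by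
      have hsubm : Set.Icc m δ ⊆ Set.Icc α δ := Set.Icc_subset_Icc hm1 le_rfl
      exact (continuousOn_const.mul (hgcont.mono hsubm)).sub
        (continuousOn_const.mul (hugcont.mono hsubm))
    have hImid2 : IntervalIntegrable (fun y => v x y * g y) volume m δ :=
      ((hcont2.congr heq2).mono (by rw [Set.uIcc_of_le hm2])).intervalIntegrable
    have hIug : IntervalIntegrable (fun y => u y * g y) volume m δ :=
      (hugcont.mono (by
        rw [Set.uIcc_of_le hm2]
        exact Set.Icc_subset_Icc hm1 le_rfl)).intervalIntegrable
    have hval2 : (∫ y in m..δ, v x y * g y) =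
        lam * u x * (∫ y in m..δ, g y) - (1 - lam) * ∫ y in m..δ, u y * g y := by
      rw [intervalIntegral.integral_congr (fun y hy =>
          heq2 (by rwa [Set.uIcc_of_le hm2] at hy)),
        intervalIntegral.integral_sub (hIgmδ.const_mul _) (hIug.const_mul _),
        intervalIntegral.integral_const_mul, intervalIntegral.integral_const_mul]
    have e3 : (∫ y in α..m, g y) + (∫ y in m..δ, g y) = 1 := by
      rw [intervalIntegral.integral_add_adjacent_intervals hIgαm hIgmδ]
      exact hg_total
    have e4 : (∫ y in m..δ, u y * g y) = -c * (u δ - u x) := by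
      rw [hFTC2 m δ hm1 hm2 le_rfl, hum]
    have hmid : (∫ y in α..δ, v x y * g y) = lam * u δ := by
      rw [← intervalIntegral.integral_add_adjacent_intervals hImid1 hImid2,
        hval1, hval2, e4]
      have e5 : lam * u x * (∫ y in α..m, g y) +
          (lam * u x * (∫ y in m..δ, g y) - (1 - lam) * (-c * (u δ - u x))) =
          lam * u x * ((∫ y in α..m, g y) + (∫ y in m..δ, g y)) +
          ((1 - lam) * c) * (u δ - u x) := by ring
      rw [e5, e3, hc']
      ring
    rw [← intervalIntegral.integral_add_adjacent_intervals
        ((hIL'.trans (hImid1.trans hImid2))) hIR',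
      ← intervalIntegral.integral_add_adjacent_intervals hIL' (hImid1.trans hImid2),
      hL0', hR0', hmid, ← hRHS]
    ring_nf
    exact le_rfl
  · -- δ < x : value is lam * u x < lam * u δ
    have heq3 : Set.EqOn (fun y => v x y * g y) (fun y => lam * u x * g y)
        (Set.Icc α δ) := by
      intro y hy
      simp only
      rw [hv x y, if_pos (lt_of_le_of_lt hy.2 hxδ)]
    have hImid : IntervalIntegrable (fun y => v x y * g y) volume α δ :=
      (((continuousOn_const.mul hgcont).congr heq3).mono
        (by rw [Set.uIcc_of_le hαδ.le])).intervalIntegrable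
    have hmid : (∫ y in α..δ, v x y * g y) = lam * u x := by
      rw [intervalIntegral.integral_congr (fun y hy =>
          heq3 (by rwa [Set.uIcc_of_le hαδ.le] at hy)),
        intervalIntegral.integral_const_mul, hg_total]
      ring
    have huxδ : u x < u δ :=
      hdec ⟨hαδ.le, hδβ.le⟩ ⟨(hαδ.trans hxδ).le, hx.2⟩ hxδ
    rw [← intervalIntegral.integral_add_adjacent_intervals (hIL'.trans hImid) hIR',
      ← intervalIntegral.integral_add_adjacent_intervals hIL' hImid,
      hL0', hR0', hmid, ← hRHS]
    nlinarith
end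

section
/- Restricted-adversary game value: under the hypotheses of Lemma 2 of the paper (u continuously differentiable, constant on [0,α], strictly decreasing positive on [α,β), δ with u(δ) = u(0)/e), suppose the maximizing player is restricted to x ∈ [0,τ] for some τ ∈ (α, δ). Define g̃ as the density -u'(y)/u(y) on [α,τ] together with an atom of mass 1 - (ln u(0) - ln u(τ)) at τ. Then g̃ is a probability distribution, and against g̃ every x ∈ [0,τ] yields expected payoff at most u(τ)·ln(u(0)/u(τ)), with equality for x ∈ [α,τ]. -/
open MeasureTheory

lemma stmt17_ae_ne (c : ℝ) : ∀ᵐ y : ℝ ∂volume, y ≠ c := by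
  rw [MeasureTheory.ae_iff]
  simp

lemma stmt17_congr_int {a b : ℝ} {f₁ f₂ : ℝ → ℝ}
    (h1 : IntervalIntegrable f₁ volume a b)
    (h2 : ∀ᵐ y ∂(volume : Measure ℝ), y ∈ Set.uIoc a b → f₁ y = f₂ y) :
    IntervalIntegrable f₂ volume a b :=
  h1.congr_ae ((MeasureTheory.ae_restrict_iff' measurableSet_uIoc).mpr h2)

lemma stmt17_ftc (u u' : ℝ → ℝ) (a b : ℝ) (hab : a ≤ b)
    (hderiv : ∀ y ∈ Set.Icc a b, HasDerivAt u (u' y) y)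
    (hcont : ContinuousOn u' (Set.Icc a b)) :
    ∫ y in a..b, u' y = u b - u a := by
  apply intervalIntegral.integral_eq_sub_of_hasDerivAt
  · intro y hy; rw [Set.uIcc_of_le hab] at hy; exact hderiv y hy
  · apply ContinuousOn.intervalIntegrable; rw [Set.uIcc_of_le hab]; exact hcont

lemma stmt17_log (u u' : ℝ → ℝ) (a b : ℝ) (hab : a ≤ b)
    (hderiv : ∀ y ∈ Set.Icc a b, HasDerivAt u (u' y) y)
    (hcont : ContinuousOn u' (Set.Icc a b))
    (hpos : ∀ y ∈ Set.Icc a b, 0 < u y) :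
    ∫ y in a..b, -u' y / u y = Real.log (u a) - Real.log (u b) := by
  have hu : ContinuousOn u (Set.Icc a b) :=
    fun y hy => ((hderiv y hy).continuousAt).continuousWithinAt
  have hint : IntervalIntegrable (fun y => -u' y / u y) volume a b := by
    apply ContinuousOn.intervalIntegrable
    rw [Set.uIcc_of_le hab]
    exact hcont.neg.div hu (fun y hy => (hpos y hy).ne')
  have h := intervalIntegral.integral_eq_sub_of_hasDerivAt
    (f := fun y => -Real.log (u y)) (f' := fun y => -u' y / u y)
    (fun y hy => by
      rw [Set.uIcc_of_le hab] at hy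
      have : HasDerivAt (fun z => Real.log (u z)) (u' y / u y) y :=
        (hderiv y hy).log (hpos y hy).ne'
      simpa [neg_div, Pi.neg_def] using this.neg) hint
  rw [h]; ring

lemma stmt17_int_cont (u u' : ℝ → ℝ) (a b : ℝ) (hab : a ≤ b)
    (hderiv : ∀ y ∈ Set.Icc a b, HasDerivAt u (u' y) y)
    (hcont : ContinuousOn u' (Set.Icc a b))
    (hpos : ∀ y ∈ Set.Icc a b, 0 < u y) (c : ℝ) :
    IntervalIntegrable (fun y => c * (-u' y / u y)) volume a b := by
  have hu : ContinuousOn u (Set.Icc a b) :=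
    fun y hy => ((hderiv y hy).continuousAt).continuousWithinAt
  apply ContinuousOn.intervalIntegrable
  rw [Set.uIcc_of_le hab]
  exact continuousOn_const.mul (hcont.neg.div hu (fun y hy => (hpos y hy).ne'))

lemma stmt17_log' (u u' : ℝ → ℝ) (a b : ℝ) (hab : a ≤ b)
    (hderiv : ∀ y ∈ Set.Icc a b, HasDerivAt u (u' y) y)
    (hcont : ContinuousOn u' (Set.Icc a b))
    (hpos : ∀ y ∈ Set.Icc a b, 0 < u y) (c : ℝ) :
    ∫ y in a..b, c * (-u' y / u y) = c * (Real.log (u a) - Real.log (u b)) := by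
  rw [intervalIntegral.integral_const_mul, stmt17_log u u' a b hab hderiv hcont hpos]

lemma stmt17_int2 (u u' : ℝ → ℝ) (a b : ℝ) (hab : a ≤ b)
    (hderiv : ∀ y ∈ Set.Icc a b, HasDerivAt u (u' y) y)
    (hcont : ContinuousOn u' (Set.Icc a b))
    (hpos : ∀ y ∈ Set.Icc a b, 0 < u y) (c : ℝ) :
    ∫ y in a..b, (c - u y) * (-u' y / u y)
      = c * (Real.log (u a) - Real.log (u b)) + (u b - u a) := by
  have h1 : Set.EqOn (fun y => (c - u y) * (-u' y / u y))
      (fun y => c * (-u' y / u y) + u' y) (Set.uIcc a b) := by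
    intro y hy
    rw [Set.uIcc_of_le hab] at hy
    have hne := (hpos y hy).ne'
    field_simp
    ring
  have hu'int : IntervalIntegrable u' volume a b := by
    apply ContinuousOn.intervalIntegrable; rw [Set.uIcc_of_le hab]; exact hcont
  rw [intervalIntegral.integral_congr h1,
    intervalIntegral.integral_add (stmt17_int_cont u u' a b hab hderiv hcont hpos c) hu'int,
    stmt17_log' u u' a b hab hderiv hcont hpos c,
    stmt17_ftc u u' a b hab hderiv hcont]

lemma stmt17_int2' (u u' : ℝ → ℝ) (a b : ℝ) (hab : a ≤ b)
    (hderiv : ∀ y ∈ Set.Icc a b, HasDerivAt u (u' y) y)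
    (hcont : ContinuousOn u' (Set.Icc a b))
    (hpos : ∀ y ∈ Set.Icc a b, 0 < u y) (c : ℝ) :
    IntervalIntegrable (fun y => (c - u y) * (-u' y / u y)) volume a b := by
  have hu : ContinuousOn u (Set.Icc a b) :=
    fun y hy => ((hderiv y hy).continuousAt).continuousWithinAt
  apply ContinuousOn.intervalIntegrable
  rw [Set.uIcc_of_le hab]
  exact (continuousOn_const.sub hu).mul
    (hcont.neg.div hu (fun y hy => (hpos y hy).ne'))

/-- Restricted-adversary game: the strategy g̃ consisting of the hazard density
-u'/u on [α,τ] plus an atom of mass 1 - ln(u(0)/u(τ)) at τ is a probability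
distribution, and against it every x ∈ [0,τ] yields expected payoff at most
u(τ)·ln(u(0)/u(τ)), with equality for x ∈ [α,τ]. Here v(x,y) = u(x) if x > y
and u(x) - u(y) if x ≤ y. -/
theorem stmt_17 (α β δ τ : ℝ) (u u' g : ℝ → ℝ) (v : ℝ → ℝ → ℝ)
    (hα : 0 < α) (hαβ : α < β)
    (hderiv : ∀ y ∈ Set.Icc α β, HasDerivAt u (u' y) y)
    (hderivcont : ContinuousOn u' (Set.Icc α β))
    (hconst : ∀ x ∈ Set.Icc 0 α, u x = u 0)
    (hdec : StrictAntiOn u (Set.Icc α β))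
    (hposu : ∀ x ∈ Set.Ico α β, 0 < u x)
    (hδ : δ ∈ Set.Ioo α β) (hδe : u δ = u 0 / Real.exp 1)
    (hτ : τ ∈ Set.Ioo α δ)
    (hg : ∀ y, g y = if y ∈ Set.Icc α τ then -u' y / u y else 0)
    (hv : ∀ x y, v x y = if x > y then u x else u x - u y) :
    (0 ≤ 1 - Real.log (u 0 / u τ)) ∧
    (∫ y in α..τ, g y) = Real.log (u 0 / u τ) ∧
    (∀ x ∈ Set.Icc (0:ℝ) τ,
      (∫ y in (0:ℝ)..τ, v x y * g y) + (1 - Real.log (u 0 / u τ)) * v x τ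
        ≤ u τ * Real.log (u 0 / u τ)) ∧
    (∀ x ∈ Set.Icc α τ,
      (∫ y in (0:ℝ)..τ, v x y * g y) + (1 - Real.log (u 0 / u τ)) * v x τ
        = u τ * Real.log (u 0 / u τ)) := by
  obtain ⟨hατ, hτδ⟩ := hτ
  obtain ⟨hαδ, hδβ⟩ := hδ
  have hτβ : τ < β := hτδ.trans hδβ
  have hpos : ∀ y ∈ Set.Icc α τ, 0 < u y :=
    fun y hy => hposu y ⟨hy.1, lt_of_le_of_lt hy.2 hτβ⟩
  have huα : 0 < u α := hpos α ⟨le_rfl, hατ.le⟩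
  have huτ : 0 < u τ := hpos τ ⟨hατ.le, le_rfl⟩
  have hu0 : u 0 = u α := (hconst α ⟨hα.le, le_rfl⟩).symm
  have hu0pos : 0 < u 0 := hu0 ▸ huα
  have hlog : Real.log (u 0 / u τ) = Real.log (u α) - Real.log (u τ) := by
    rw [Real.log_div hu0pos.ne' huτ.ne', hu0]
  have hD : ∀ a b : ℝ, α ≤ a → b ≤ τ → ∀ y ∈ Set.Icc a b, HasDerivAt u (u' y) y :=
    fun a b ha hb y hy => hderiv y ⟨ha.trans hy.1, hy.2.trans (hb.trans hτβ.le)⟩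
  have hC : ∀ a b : ℝ, α ≤ a → b ≤ τ → ContinuousOn u' (Set.Icc a b) :=
    fun a b ha hb => hderivcont.mono (Set.Icc_subset_Icc ha (hb.trans hτβ.le))
  have hP : ∀ a b : ℝ, α ≤ a → b ≤ τ → ∀ y ∈ Set.Icc a b, 0 < u y :=
    fun a b ha hb y hy => hpos y ⟨ha.trans hy.1, hy.2.trans hb⟩
  -- Part 1
  have huδ : 0 < u δ := hposu δ ⟨hαδ.le, hδβ⟩
  have hlogδ : Real.log (u δ) = Real.log (u α) - 1 := by
    rw [hδe, Real.log_div hu0pos.ne' (Real.exp_ne_zero 1), Real.log_exp, hu0]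
  have hlt : Real.log (u δ) < Real.log (u τ) :=
    Real.log_lt_log huδ (hdec ⟨hατ.le, hτβ.le⟩ ⟨hαδ.le, hδβ.le⟩ hτδ)
  have part1 : 0 ≤ 1 - Real.log (u 0 / u τ) := by
    rw [hlog]; linarith [hlt, hlogδ]
  -- Part 2
  have part2 : (∫ y in α..τ, g y) = Real.log (u 0 / u τ) := by
    rw [hlog]
    rw [intervalIntegral.integral_congr (g := fun y => -u' y / u y)
      (fun y hy => by
        rw [Set.uIcc_of_le hατ.le] at hy
        rw [hg, if_pos hy])]
    exact stmt17_log u u' α τ hατ.le (hD α τ le_rfl le_rfl) (hC α τ le_rfl le_rfl)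
      (hP α τ le_rfl le_rfl)
  -- Key equality
  have key : ∀ x ∈ Set.Icc (0:ℝ) τ,
      (∫ y in (0:ℝ)..τ, v x y * g y) + (1 - Real.log (u 0 / u τ)) * v x τ
        = u τ * Real.log (u 0 / u τ) := by
    intro x hx
    obtain ⟨hx0, hxτ⟩ := hx
    have hzero_ae : ∀ᵐ y ∂(volume : Measure ℝ), y ∈ Set.uIoc 0 α → v x y * g y = 0 := by
      filter_upwards [stmt17_ae_ne α] with y hy hmem
      rw [Set.uIoc_of_le hα.le] at hmem
      have hnot : y ∉ Set.Icc α τ := fun hc => hy (le_antisymm hmem.2 hc.1)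
      rw [hg, if_neg hnot, mul_zero]
    have hint0 : IntervalIntegrable (fun y => v x y * g y) volume 0 α :=
      stmt17_congr_int (intervalIntegrable_const (c := (0:ℝ)))
        (by filter_upwards [hzero_ae] with y h hmem; exact (h hmem).symm)
    have hI0 : ∫ y in (0:ℝ)..α, v x y * g y = 0 := by
      rw [intervalIntegral.integral_congr_ae hzero_ae, intervalIntegral.integral_zero]
    rcases le_total x α with hxα | hαx
    · -- x ≤ α
      have hxv : u x = u α := by rw [hconst x ⟨hx0, hxα⟩, hu0]
      have heq' : ∀ y ∈ Set.Icc α τ, v x y * g y = (u x - u y) * (-u' y / u y) := by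
        intro y hy
        rw [hv, if_neg (not_lt.mpr (hxα.trans hy.1)), hg, if_pos hy]
      have hintm : IntervalIntegrable (fun y => v x y * g y) volume α τ :=
        stmt17_congr_int
          (stmt17_int2' u u' α τ hατ.le (hD α τ le_rfl le_rfl) (hC α τ le_rfl le_rfl)
            (hP α τ le_rfl le_rfl) (u x))
          (Filter.Eventually.of_forall (fun y hy => by
            rw [Set.uIoc_of_le hατ.le] at hy
            exact (heq' y ⟨hy.1.le, hy.2⟩).symm))
      have hIm : ∫ y in α..τ, v x y * g y
          = u x * (Real.log (u α) - Real.log (u τ)) + (u τ - u α) := by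
        rw [intervalIntegral.integral_congr (g := fun y => (u x - u y) * (-u' y / u y))
          (fun y hy => heq' y (by rwa [Set.uIcc_of_le hατ.le] at hy))]
        exact stmt17_int2 u u' α τ hατ.le (hD α τ le_rfl le_rfl) (hC α τ le_rfl le_rfl)
          (hP α τ le_rfl le_rfl) (u x)
      have hsplit := intervalIntegral.integral_add_adjacent_intervals hint0 hintm
      have hvxτ : v x τ = u x - u τ := by
        rw [hv, if_neg (not_lt.mpr (hxα.trans hατ.le))]
      rw [← hsplit, hI0, hIm, hlog, hvxτ, hxv]
      ring
    · -- α ≤ x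
      have hmid_ae : ∀ᵐ y ∂(volume : Measure ℝ), y ∈ Set.uIoc α x →
          v x y * g y = u x * (-u' y / u y) := by
        filter_upwards [stmt17_ae_ne x] with y hy hmem
        rw [Set.uIoc_of_le hαx] at hmem
        have h1 : y ∈ Set.Icc α τ := ⟨hmem.1.le, hmem.2.trans hxτ⟩
        have h2 : x > y := lt_of_le_of_ne hmem.2 hy
        rw [hv, if_pos h2, hg, if_pos h1]
      have hintm : IntervalIntegrable (fun y => v x y * g y) volume α x :=
        stmt17_congr_int
          (stmt17_int_cont u u' α x hαx (hD α x le_rfl hxτ) (hC α x le_rfl hxτ)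
            (hP α x le_rfl hxτ) (u x))
          (by filter_upwards [hmid_ae] with y h hmem; exact (h hmem).symm)
      have hIm : ∫ y in α..x, v x y * g y
          = u x * (Real.log (u α) - Real.log (u x)) := by
        rw [intervalIntegral.integral_congr_ae hmid_ae]
        exact stmt17_log' u u' α x hαx (hD α x le_rfl hxτ) (hC α x le_rfl hxτ)
          (hP α x le_rfl hxτ) (u x)
      have heq2 : ∀ y ∈ Set.Icc x τ, v x y * g y = (u x - u y) * (-u' y / u y) := by
        intro y hy
        have h1 : y ∈ Set.Icc α τ := ⟨hαx.trans hy.1, hy.2⟩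
        rw [hv, if_neg (not_lt.mpr hy.1), hg, if_pos h1]
      have hint2 : IntervalIntegrable (fun y => v x y * g y) volume x τ :=
        stmt17_congr_int
          (stmt17_int2' u u' x τ hxτ (hD x τ hαx le_rfl) (hC x τ hαx le_rfl)
            (hP x τ hαx le_rfl) (u x))
          (Filter.Eventually.of_forall (fun y hy => by
            rw [Set.uIoc_of_le hxτ] at hy
            exact (heq2 y ⟨hy.1.le, hy.2⟩).symm))
      have hI2 : ∫ y in x..τ, v x y * g y
          = u x * (Real.log (u x) - Real.log (u τ)) + (u τ - u x) := by
        rw [intervalIntegral.integral_congr (g := fun y => (u x - u y) * (-u' y / u y))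
          (fun y hy => heq2 y (by rwa [Set.uIcc_of_le hxτ] at hy))]
        exact stmt17_int2 u u' x τ hxτ (hD x τ hαx le_rfl) (hC x τ hαx le_rfl)
          (hP x τ hαx le_rfl) (u x)
      have hs1 := intervalIntegral.integral_add_adjacent_intervals hint0 hintm
      have hs2 := intervalIntegral.integral_add_adjacent_intervals (hint0.trans hintm) hint2
      have hvxτ : v x τ = u x - u τ := by rw [hv, if_neg (not_lt.mpr hxτ)]
      rw [← hs2, ← hs1, hI0, hIm, hI2, hlog, hvxτ]
      ring
  exact ⟨part1, part2, fun x hx => le_of_eq (key x hx),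
    fun x hx => key x ⟨le_trans hα.le hx.1, hx.2⟩⟩
end

section
/- In the binary-type model with b₂ - b₁ = 1 and prior μ ∈ (0,1) of the low type, no segmentation achieves regret below U*(0)/e, and the BBM (hazard-rate) segmentation achieves regret exactly U*(0)/e; hence the minimax regret min_σ max_s (U*(s) - U(σ,s)) equals U*(0)/e, where U*(0) = min(b₁μ, 1-μ) ... specifically U*(0) = 1-μ if μ > 1/b₂ and b₁μ if μ ≤ 1/b₂. -/
open MeasureTheory

/-- Optimal buyer surplus in the binary model (closed form of Lemma 3):
U*(s) = 1-μ for s < b₂ - 1/μ, (b₁-s)·μ for b₂ - 1/μ ≤ s ≤ b₁, and 0 beyond. -/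
noncomputable def binUstar (b₁ b₂ μ s : ℝ) : ℝ :=
  if s < b₂ - 1 / μ then 1 - μ else if s ≤ b₁ then (b₁ - s) * μ else 0

/-- Buyer surplus at a posterior with probability p of the low type b₁, when
the seller with valuation s best-responds (ties broken toward the low price):
1-p if the low price b₁ is optimal, 0 otherwise. -/
noncomputable def binSurplus (b₁ b₂ p s : ℝ) : ℝ :=
  if (b₂ - s) * (1 - p) ≤ b₁ - s then 1 - p else 0

open scoped ENNReal NNReal
open Set

set_option linter.unusedSectionVars false
set_option linter.unusedVariables false
set_option maxHeartbeats 1000000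


namespace Stmt19

/-- Mixture of an atom at `x₀` with weight `c` and a density `ψ` w.r.t. Lebesgue. -/
noncomputable def mixM (c x₀ : ℝ) (ψ : ℝ → ℝ) : Measure ℝ :=
  ENNReal.ofReal c • Measure.dirac x₀ +
    (volume : Measure ℝ).withDensity (fun p => ENNReal.ofReal (ψ p))

lemma integrable_dirac {f : ℝ → ℝ} (hf : Measurable f) (a : ℝ) :
    Integrable f (Measure.dirac a) := by
  refine ⟨hf.aestronglyMeasurable, ?_⟩
  simp [HasFiniteIntegral, lintegral_dirac]

lemma withDensity_ofReal_eq (ψ : ℝ → ℝ) :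
    (volume : Measure ℝ).withDensity (fun p => ENNReal.ofReal (ψ p)) =
    (volume : Measure ℝ).withDensity (fun p => ((ψ p).toNNReal : ℝ≥0∞)) := rfl

lemma integrable_mixM {c x₀ : ℝ} {ψ : ℝ → ℝ} (hψm : Measurable ψ)
    (hψ0 : ∀ p, 0 ≤ ψ p) {g : ℝ → ℝ} (hgm : Measurable g)
    (hint : Integrable (fun p => ψ p * g p) volume) :
    Integrable g (mixM c x₀ ψ) := by
  have hψnn : Measurable (fun p => (ψ p).toNNReal) := hψm.real_toNNReal
  rw [mixM, withDensity_ofReal_eq]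
  refine Integrable.add_measure ?_ ?_
  · exact (integrable_dirac hgm x₀).smul_measure ENNReal.ofReal_ne_top
  · rw [integrable_withDensity_iff_integrable_smul hψnn]
    refine hint.congr (Filter.Eventually.of_forall fun p => ?_)
    simp [NNReal.smul_def, Real.coe_toNNReal _ (hψ0 p)]

lemma integral_mixM {c x₀ : ℝ} (hc : 0 ≤ c) {ψ : ℝ → ℝ} (hψm : Measurable ψ)
    (hψ0 : ∀ p, 0 ≤ ψ p) {g : ℝ → ℝ} (hgm : Measurable g)
    (hint : Integrable (fun p => ψ p * g p) volume) :
    ∫ p, g p ∂(mixM c x₀ ψ) = c * g x₀ + ∫ p, ψ p * g p := by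
  have hψnn : Measurable (fun p => (ψ p).toNNReal) := hψm.real_toNNReal
  rw [mixM, withDensity_ofReal_eq]
  rw [integral_add_measure
      ((integrable_dirac hgm x₀).smul_measure ENNReal.ofReal_ne_top)
      (by rw [integrable_withDensity_iff_integrable_smul hψnn]
          refine hint.congr (Filter.Eventually.of_forall fun p => ?_)
          simp [NNReal.smul_def, Real.coe_toNNReal _ (hψ0 p)])]
  rw [integral_smul_measure, integral_dirac, ENNReal.toReal_ofReal hc,
    integral_withDensity_eq_integral_smul hψnn]
  have h : ∫ x, ((ψ x).toNNReal) • g x ∂volume = ∫ p, ψ p * g p :=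
    integral_congr_ae (Filter.Eventually.of_forall fun p => by
      simp [NNReal.smul_def, Real.coe_toNNReal _ (hψ0 p)])
  rw [h, smul_eq_mul]

lemma isProbability_mixM {c x₀ : ℝ} (hc : 0 ≤ c) {ψ : ℝ → ℝ}
    (hψ0 : ∀ p, 0 ≤ ψ p) (hint : Integrable ψ volume)
    (hsum : c + ∫ p, ψ p = 1) :
    IsProbabilityMeasure (mixM c x₀ ψ) := by
  constructor
  rw [mixM, Measure.add_apply, Measure.smul_apply, Measure.dirac_apply_of_mem (mem_univ x₀),
    withDensity_apply _ MeasurableSet.univ, Measure.restrict_univ, smul_eq_mul, mul_one,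
    ← ofReal_integral_eq_lintegral_ofReal hint (Filter.Eventually.of_forall hψ0),
    ← ENNReal.ofReal_add hc (integral_nonneg hψ0), hsum, ENNReal.ofReal_one]

lemma mixM_null {c x₀ : ℝ} {ψ : ℝ → ℝ} {S : Set ℝ} (hS : MeasurableSet S)
    (hx : x₀ ∈ S) (hψS : ∀ p ∉ S, ψ p = 0) :
    mixM c x₀ ψ Sᶜ = 0 := by
  rw [mixM, Measure.add_apply, Measure.smul_apply,
    Measure.dirac_apply' _ hS.compl, withDensity_apply _ hS.compl]
  have h1 : Sᶜ.indicator (1 : ℝ → ℝ≥0∞) x₀ = 0 := by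
    simp [indicator_apply, hx]
  have h2 : ∫⁻ p in Sᶜ, ENNReal.ofReal (ψ p) ∂volume = 0 := by
    rw [setLIntegral_congr_fun hS.compl
      (g := fun _ => (0:ℝ≥0∞))
      (fun p hp => by simp [hψS p hp])]
    simp
  simp [h1, h2]

/-- a.e. membership for the mix measure. -/
lemma mixM_ae_mem {c x₀ : ℝ} {ψ : ℝ → ℝ} {S : Set ℝ} (hS : MeasurableSet S)
    (hx : x₀ ∈ S) (hψS : ∀ p ∉ S, ψ p = 0) :
    ∀ᵐ p ∂(mixM c x₀ ψ), p ∈ S := by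
  rw [ae_iff]
  have : {p | ¬ p ∈ S} = Sᶜ := rfl
  rw [this]
  exact mixM_null hS hx hψS

end Stmt19



namespace Stmt19

noncomputable def U0 (b₁ μ : ℝ) : ℝ := min (b₁ * μ) (1 - μ)
noncomputable def Rg (b₁ μ : ℝ) : ℝ := U0 b₁ μ / Real.exp 1
noncomputable def qL (b₁ μ : ℝ) : ℝ := μ / (μ + U0 b₁ μ)
noncomputable def qH (b₁ μ : ℝ) : ℝ := μ / (μ + Rg b₁ μ)
noncomputable def sL (b₁ μ : ℝ) : ℝ := b₁ - U0 b₁ μ / μ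
noncomputable def sH (b₁ μ : ℝ) : ℝ := b₁ - Rg b₁ μ / μ

section Facts
variable {b₁ b₂ μ : ℝ} (hb₁ : 0 < b₁) (hμ0 : 0 < μ) (hμ1 : μ < 1)

lemma one_lt_e : (1:ℝ) < Real.exp 1 := by
  have := Real.add_one_le_exp (1:ℝ); linarith

include hb₁ hμ0 hμ1

lemma U0_pos : 0 < U0 b₁ μ := lt_min (mul_pos hb₁ hμ0) (by linarith)

lemma Rg_pos : 0 < Rg b₁ μ := div_pos (U0_pos hb₁ hμ0 hμ1) (Real.exp_pos 1)

lemma Rg_lt_U0 : Rg b₁ μ < U0 b₁ μ := div_lt_self (U0_pos hb₁ hμ0 hμ1) one_lt_e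

lemma U0_le_one_sub : U0 b₁ μ ≤ 1 - μ := min_le_right _ _

lemma U0_le_bμ : U0 b₁ μ ≤ b₁ * μ := min_le_left _ _

lemma Rg_lt_one_sub : Rg b₁ μ < 1 - μ :=
  lt_of_lt_of_le (Rg_lt_U0 hb₁ hμ0 hμ1) (U0_le_one_sub hb₁ hμ0 hμ1)

lemma qL_pos : 0 < qL b₁ μ :=
  div_pos hμ0 (by have := U0_pos hb₁ hμ0 hμ1; linarith)

lemma qL_lt_qH : qL b₁ μ < qH b₁ μ := by
  have h1 := U0_pos hb₁ hμ0 hμ1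
  have h2 := Rg_pos hb₁ hμ0 hμ1
  have h3 := Rg_lt_U0 hb₁ hμ0 hμ1
  exact div_lt_div_of_pos_left hμ0 (by linarith) (by linarith)

lemma qH_lt_one : qH b₁ μ < 1 := by
  have h2 := Rg_pos hb₁ hμ0 hμ1
  rw [qH, div_lt_one (by linarith)]; linarith

lemma qL_inv : (qL b₁ μ)⁻¹ = (μ + U0 b₁ μ) / μ := by
  rw [qL]; field_simp

lemma qH_inv : (qH b₁ μ)⁻¹ = (μ + Rg b₁ μ) / μ := by
  rw [qH]; field_simp

lemma sL_nonneg : 0 ≤ sL b₁ μ := by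
  have := U0_le_bμ hb₁ hμ0 hμ1
  rw [sL, sub_nonneg, div_le_iff₀ hμ0]; linarith

lemma sL_lt_sH : sL b₁ μ < sH b₁ μ := by
  have := Rg_lt_U0 hb₁ hμ0 hμ1
  have h := Rg_lt_U0 hb₁ hμ0 hμ1
  have : Rg b₁ μ / μ < U0 b₁ μ / μ := by
    rw [div_lt_div_iff_of_pos_right hμ0]; exact h
  rw [sL, sH]; linarith

lemma sH_lt_b₁ : sH b₁ μ < b₁ := by
  have h2 := Rg_pos hb₁ hμ0 hμ1
  rw [sH]; have : 0 < Rg b₁ μ / μ := div_pos h2 hμ0; linarith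

end Facts
end Stmt19


namespace Stmt19
section Facts2
variable {b₁ b₂ μ : ℝ} (hb : b₂ = b₁ + 1) (hb₁ : 0 < b₁) (hμ0 : 0 < μ) (hμ1 : μ < 1)

include hb hb₁ hμ0 hμ1

lemma b2_sub_sL : b₂ - sL b₁ μ = (qL b₁ μ)⁻¹ := by
  rw [hb, sL, qL_inv hb₁ hμ0 hμ1]; field_simp; ring

lemma b2_sub_sH : b₂ - sH b₁ μ = (qH b₁ μ)⁻¹ := by
  rw [hb, sH, qH_inv hb₁ hμ0 hμ1]; field_simp; ring

lemma b2_bound : b₂ - 1/μ ≤ sL b₁ μ := by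
  have h := U0_le_one_sub (μ := μ) hb₁ hμ0 hμ1
  have : U0 b₁ μ / μ ≤ (1 - μ)/μ := by
    rw [div_le_div_iff_of_pos_right hμ0]; exact h
  rw [hb, sL]
  have hid : (1 - μ)/μ = 1/μ - 1 := by field_simp
  linarith [hid ▸ this]

omit hb₁ hμ0 hμ1 in
lemma binSurplus_eq (p s : ℝ) :
    binSurplus b₁ b₂ p s = if 1 ≤ (b₂ - s) * p then 1 - p else 0 := by
  rw [binSurplus]
  refine if_congr ?_ rfl rfl
  constructor <;> intro h <;> nlinarith [hb]

lemma Ustar_le (s : ℝ) (hs : 0 ≤ s) : binUstar b₁ b₂ μ s ≤ U0 b₁ μ := by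
  rw [binUstar]
  split_ifs with h1 h2
  · have h3 : 0 < b₂ - 1/μ := lt_of_le_of_lt hs h1
    have h4 : 1/μ < b₁ + 1 := by rw [hb] at h3; linarith
    have h5 : 1 < (b₁ + 1) * μ := by
      rw [← div_lt_iff₀ hμ0]; exact h4
    exact le_min (by nlinarith) le_rfl
  · push_neg at h1
    have h3 : b₁ - s ≤ 1/μ - 1 := by rw [hb] at h1; linarith
    have h4 : (b₁ - s) * μ ≤ (1/μ - 1) * μ := mul_le_mul_of_nonneg_right h3 hμ0.le
    have h5 : (1/μ - 1) * μ = 1 - μ := by field_simp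
    exact le_min (by nlinarith) (by linarith [h5 ▸ h4])
  · exact (U0_pos hb₁ hμ0 hμ1).le

lemma Ustar_eq_on (s : ℝ) (h1 : sL b₁ μ ≤ s) (h2 : s ≤ b₁) :
    binUstar b₁ b₂ μ s = (b₁ - s) * μ := by
  rw [binUstar, if_neg (by push_neg; linarith [b2_bound hb hb₁ hμ0 hμ1]), if_pos h2]

lemma Ustar_sL : binUstar b₁ b₂ μ (sL b₁ μ) = U0 b₁ μ := by
  rw [Ustar_eq_on hb hb₁ hμ0 hμ1 _ le_rfl
    (by have := U0_pos hb₁ hμ0 hμ1; rw [sL]; nlinarith [div_pos this hμ0]), sL]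
  field_simp
  ring

lemma Ustar_le_Rg (s : ℝ) (hs : sH b₁ μ ≤ s) : binUstar b₁ b₂ μ s ≤ Rg b₁ μ := by
  have hL := b2_bound hb hb₁ hμ0 hμ1
  have hLH := sL_lt_sH hb₁ hμ0 hμ1
  rw [binUstar]
  split_ifs with h1 h2
  · linarith
  · have h3 : (b₁ - s) * μ ≤ (b₁ - sH b₁ μ) * μ := by nlinarith
    have h4 : (b₁ - sH b₁ μ) * μ = Rg b₁ μ := by rw [sH]; field_simp; ring
    linarith
  · exact (Rg_pos hb₁ hμ0 hμ1).le

end Facts2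

lemma binSurplus_nonneg {b₁ b₂ p : ℝ} (s : ℝ) (hp : p ≤ 1) : 0 ≤ binSurplus b₁ b₂ p s := by
  rw [binSurplus]; split_ifs <;> linarith

lemma norm_binSurplus_le {b₁ b₂ p : ℝ} (s : ℝ) (hp0 : 0 ≤ p) (hp1 : p ≤ 1) :
    ‖binSurplus b₁ b₂ p s‖ ≤ 1 := by
  rw [binSurplus]; split_ifs <;> rw [Real.norm_eq_abs, abs_le] <;> constructor <;> linarith

lemma measurable_binSurplus_pair (b₁ b₂ : ℝ) :
    Measurable (fun z : ℝ × ℝ => binSurplus b₁ b₂ z.1 z.2) := by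
  unfold binSurplus
  exact Measurable.ite
    (measurableSet_le (((measurable_const.sub measurable_snd).mul
      (measurable_const.sub measurable_fst))) (measurable_const.sub measurable_snd))
    (measurable_const.sub measurable_fst) measurable_const

lemma measurable_binSurplus_p (b₁ b₂ s : ℝ) :
    Measurable (fun p : ℝ => binSurplus b₁ b₂ p s) :=
  (measurable_binSurplus_pair b₁ b₂).comp (measurable_id.prodMk measurable_const)

lemma measurable_binSurplus_s (b₁ b₂ p : ℝ) :
    Measurable (fun s : ℝ => binSurplus b₁ b₂ p s) :=
  (measurable_binSurplus_pair b₁ b₂).comp (measurable_const.prodMk measurable_id)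

lemma measurable_binUstar (b₁ b₂ μ : ℝ) : Measurable (binUstar b₁ b₂ μ) := by
  unfold binUstar
  exact Measurable.ite (measurableSet_lt measurable_id measurable_const)
    measurable_const
    (Measurable.ite (measurableSet_le measurable_id measurable_const)
      ((measurable_const.sub measurable_id).mul measurable_const) measurable_const)

end Stmt19
namespace Stmt19

lemma ftc {a b : ℝ} (hab : a ≤ b) (H f : ℝ → ℝ)
    (hH : ∀ x ∈ Icc a b, HasDerivAt H (f x) x) (hf : ContinuousOn f (Icc a b)) :
    ∫ x in a..b, f x = H b - H a := by
  apply intervalIntegral.integral_eq_sub_of_hasDerivAt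
  · intro x hx; rw [uIcc_of_le hab] at hx; exact hH x hx
  · exact (hf.mono (by rw [uIcc_of_le hab])).intervalIntegrable

/-- derivative of x ↦ μ(-x⁻¹ + log x - log(1-x)) is μ/(x²(1-x)) -/
lemma hasDeriv_G1 (μ x : ℝ) (hx0 : 0 < x) (hx1 : x < 1) :
    HasDerivAt (fun y => μ * (-y⁻¹ + (Real.log y - Real.log (1 - y))))
      (μ / (x^2 * (1-x))) x := by
  have h1 : HasDerivAt (fun y : ℝ => -y⁻¹) ((x^2)⁻¹) x := by
    have h := (hasDerivAt_inv hx0.ne').neg; rw [neg_neg] at h; exact h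
  have h2 : HasDerivAt Real.log x⁻¹ x := Real.hasDerivAt_log hx0.ne'
  have h3 : HasDerivAt (fun y : ℝ => 1 - y) (-1) x := by
    simpa using (hasDerivAt_id x).const_sub 1
  have h4 : HasDerivAt (fun y : ℝ => Real.log (1 - y)) ((1-x)⁻¹ * (-1)) x :=
    (Real.hasDerivAt_log (by linarith)).comp x h3
  have h5 := ((h1.add (h2.sub h4)).const_mul μ)
  refine h5.congr_deriv ?_
  have e1 : (1:ℝ) - x ≠ 0 := by linarith
  field_simp
  ring

lemma hasDeriv_G2 (μ x : ℝ) (hx0 : 0 < x) (hx1 : x < 1) :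
    HasDerivAt (fun y => μ * (Real.log y - Real.log (1 - y))) (μ / (x * (1-x))) x := by
  have h2 : HasDerivAt Real.log x⁻¹ x := Real.hasDerivAt_log hx0.ne'
  have h3 : HasDerivAt (fun y : ℝ => 1 - y) (-1) x := by
    simpa using (hasDerivAt_id x).const_sub 1
  have h4 : HasDerivAt (fun y : ℝ => Real.log (1 - y)) ((1-x)⁻¹ * (-1)) x :=
    (Real.hasDerivAt_log (by linarith)).comp x h3
  have h5 := (h2.sub h4).const_mul μ
  refine h5.congr_deriv ?_
  have e1 : (1:ℝ) - x ≠ 0 := by linarith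
  field_simp
  ring

lemma hasDeriv_G3 (μ x : ℝ) (hx0 : 0 < x) :
    HasDerivAt (fun y => μ * (-y⁻¹)) (μ / x^2) x := by
  have h1 : HasDerivAt (fun y : ℝ => -y⁻¹) ((x^2)⁻¹) x := by
    have h := (hasDerivAt_inv hx0.ne').neg; rw [neg_neg] at h; exact h
  have h5 := h1.const_mul μ
  refine h5.congr_deriv ?_
  try field_simp

lemma hasDeriv_G4 (K b₁ x : ℝ) (hx : x < b₁) :
    HasDerivAt (fun y => K * (b₁ - y)⁻¹) (K / (b₁ - x)^2) x := by
  have h3 : HasDerivAt (fun y : ℝ => b₁ - y) (-1) x := by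
    simpa using (hasDerivAt_id x).const_sub b₁
  have h1 : HasDerivAt (fun y : ℝ => (b₁ - y)⁻¹) (-((b₁-x)^2)⁻¹ * (-1)) x :=
    (hasDerivAt_inv (by linarith : b₁ - x ≠ 0)).comp x h3
  have h5 := h1.const_mul K
  refine h5.congr_deriv ?_
  have e1 : b₁ - x ≠ 0 := by linarith
  field_simp

lemma hasDeriv_G5 (K b₁ x : ℝ) (hx : x < b₁) :
    HasDerivAt (fun y => -(K * Real.log (b₁ - y))) (K / (b₁ - x)) x := by
  have h3 : HasDerivAt (fun y : ℝ => b₁ - y) (-1) x := by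
    simpa using (hasDerivAt_id x).const_sub b₁
  have h1 : HasDerivAt (fun y : ℝ => Real.log (b₁ - y)) ((b₁-x)⁻¹ * (-1)) x :=
    (Real.hasDerivAt_log (by linarith : b₁ - x ≠ 0)).comp x h3
  have h5 := (h1.const_mul K).neg
  refine h5.congr_deriv ?_
  have e1 : b₁ - x ≠ 0 := by linarith
  field_simp

lemma contOn_aux {a b : ℝ} (f g : ℝ → ℝ) (hf : ContinuousOn f (Icc a b))
    (hg : ContinuousOn g (Icc a b)) (hg0 : ∀ x ∈ Icc a b, g x ≠ 0) :
    ContinuousOn (fun x => f x / g x) (Icc a b) := hf.div hg hg0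

lemma int_G1 {μ c d : ℝ} (hμ0 : 0 < μ) (h0c : 0 < c) (hcd : c ≤ d) (hd1 : d < 1) :
    ∫ x in c..d, μ / (x^2 * (1-x)) =
      μ * (c⁻¹ - d⁻¹) + μ * ((Real.log d - Real.log (1-d)) - (Real.log c - Real.log (1-c))) := by
  rw [ftc hcd (fun y => μ * (-y⁻¹ + (Real.log y - Real.log (1 - y)))) _
    (fun x hx => hasDeriv_G1 μ x (lt_of_lt_of_le h0c hx.1) (lt_of_le_of_lt hx.2 hd1))
    (contOn_aux _ _ continuousOn_const
      (by fun_prop)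
      (fun x hx => by
        have h1 : 0 < x := lt_of_lt_of_le h0c hx.1
        have h2 : x < 1 := lt_of_le_of_lt hx.2 hd1
        exact (mul_pos (pow_pos h1 2) (by linarith : (0:ℝ) < 1 - x)).ne'))]
  ring

lemma int_G2 {μ c d : ℝ} (hμ0 : 0 < μ) (h0c : 0 < c) (hcd : c ≤ d) (hd1 : d < 1) :
    ∫ x in c..d, μ / (x * (1-x)) =
      μ * ((Real.log d - Real.log (1-d)) - (Real.log c - Real.log (1-c))) := by
  rw [ftc hcd (fun y => μ * (Real.log y - Real.log (1 - y))) _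
    (fun x hx => hasDeriv_G2 μ x (lt_of_lt_of_le h0c hx.1) (lt_of_le_of_lt hx.2 hd1))
    (contOn_aux _ _ continuousOn_const (by fun_prop)
      (fun x hx => by
        have h1 : 0 < x := lt_of_lt_of_le h0c hx.1
        have h2 : x < 1 := lt_of_le_of_lt hx.2 hd1
        exact (mul_pos h1 (by linarith : (0:ℝ) < 1 - x)).ne'))]
  ring

lemma int_G3 {μ c d : ℝ} (h0c : 0 < c) (hcd : c ≤ d) :
    ∫ x in c..d, μ / x^2 = μ * (c⁻¹ - d⁻¹) := by
  rw [ftc hcd (fun y => μ * (-y⁻¹)) _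
    (fun x hx => hasDeriv_G3 μ x (lt_of_lt_of_le h0c hx.1))
    (contOn_aux _ _ continuousOn_const (by fun_prop)
      (fun x hx => by have h1 : 0 < x := lt_of_lt_of_le h0c hx.1; exact (pow_pos h1 2).ne'))]
  ring

lemma int_G4 {K b₁ c d : ℝ} (hcd : c ≤ d) (hd : d < b₁) :
    ∫ x in c..d, K / (b₁ - x)^2 = K * ((b₁ - d)⁻¹ - (b₁ - c)⁻¹) := by
  rw [ftc hcd (fun y => K * (b₁ - y)⁻¹) _
    (fun x hx => hasDeriv_G4 K b₁ x (lt_of_le_of_lt hx.2 hd))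
    (contOn_aux _ _ continuousOn_const (by fun_prop)
      (fun x hx => by have h1 : x < b₁ := lt_of_le_of_lt hx.2 hd; exact (pow_pos (by linarith : (0:ℝ) < b₁ - x) 2).ne'))]
  ring

lemma int_G5 {K b₁ c d : ℝ} (hcd : c ≤ d) (hd : d < b₁) :
    ∫ x in c..d, K / (b₁ - x) = K * (Real.log (b₁ - c) - Real.log (b₁ - d)) := by
  rw [ftc hcd (fun y => -(K * Real.log (b₁ - y))) _
    (fun x hx => hasDeriv_G5 K b₁ x (lt_of_le_of_lt hx.2 hd))
    (contOn_aux _ _ continuousOn_const (by fun_prop)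
      (fun x hx => by have h1 : x < b₁ := lt_of_le_of_lt hx.2 hd; exact (by linarith : (0:ℝ) < b₁ - x).ne'))]
  ring

end Stmt19
namespace Stmt19
section Sigma
variable {b₁ b₂ μ : ℝ} (hb : b₂ = b₁ + 1) (hb₁ : 0 < b₁) (hμ0 : 0 < μ) (hμ1 : μ < 1)

/-- density of the BBM segmentation -/
noncomputable def fσ (μ : ℝ) : ℝ → ℝ := fun p => μ / (p^2 * (1 - p))
noncomputable def ψσ (b₁ μ : ℝ) : ℝ → ℝ := indicator (Icc (qL b₁ μ) (qH b₁ μ)) (fσ μ)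
noncomputable def cσ (b₁ μ : ℝ) : ℝ := 1 - μ - U0 b₁ μ + Rg b₁ μ
noncomputable def σStar (b₁ μ : ℝ) : Measure ℝ := mixM (cσ b₁ μ) 0 (ψσ b₁ μ)

lemma integral_indicator_Icc {a b : ℝ} (hab : a ≤ b) (h : ℝ → ℝ) :
    ∫ p, (Icc a b).indicator h p = ∫ x in a..b, h x := by
  rw [integral_indicator measurableSet_Icc, integral_Icc_eq_integral_Ioc,
    ← intervalIntegral.integral_of_le hab]

lemma integrable_indicator_Icc (a b : ℝ) {h : ℝ → ℝ} (hh : ContinuousOn h (Icc a b)) :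
    Integrable ((Icc a b).indicator h) volume :=
  (integrable_indicator_iff measurableSet_Icc).2 hh.integrableOn_Icc

include hb₁ hμ0 hμ1

lemma contOn_fσ {a b : ℝ} (ha : 0 < a) (hb' : b < 1) : ContinuousOn (fσ μ) (Icc a b) := by
  apply ContinuousOn.div continuousOn_const (by fun_prop)
  intro x hx
  exact (mul_pos (pow_pos (lt_of_lt_of_le ha hx.1) 2)
    (by linarith [hx.2] : (0:ℝ) < 1 - x)).ne'

lemma measurable_ψσ : Measurable (ψσ b₁ μ) := by
  apply Measurable.indicator _ measurableSet_Icc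
  exact measurable_const.div ((measurable_id.pow_const 2).mul (measurable_const.sub measurable_id))

lemma ψσ_nonneg : ∀ p, 0 ≤ ψσ b₁ μ p := by
  intro p
  rw [ψσ, indicator_apply]
  split_ifs with h
  · have h1 : 0 < p := lt_of_lt_of_le (qL_pos hb₁ hμ0 hμ1) h.1
    have h2 : p < 1 := lt_of_le_of_lt h.2 (qH_lt_one hb₁ hμ0 hμ1)
    have h3 : 0 < p^2 * (1-p) := mul_pos (pow_pos h1 2) (by linarith)
    exact le_of_lt (div_pos hμ0 h3)
  · exact le_refl 0

lemma ψσ_zero_outside : ∀ p ∉ Icc (0:ℝ) 1, ψσ b₁ μ p = 0 := by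
  intro p hp
  apply indicator_of_notMem
  intro hmem
  exact hp ⟨le_trans (qL_pos hb₁ hμ0 hμ1).le hmem.1,
    le_trans hmem.2 (qH_lt_one hb₁ hμ0 hμ1).le⟩

lemma cσ_nonneg : 0 ≤ cσ b₁ μ := by
  have h1 := U0_le_one_sub (b₁ := b₁) hb₁ hμ0 hμ1
  have h2 := Rg_pos hb₁ hμ0 hμ1
  rw [cσ]; linarith

lemma log_U0_sub_Rg : Real.log (U0 b₁ μ) - Real.log (Rg b₁ μ) = 1 := by
  have hU := U0_pos hb₁ hμ0 hμ1
  have hR := Rg_pos hb₁ hμ0 hμ1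
  rw [← Real.log_div hU.ne' hR.ne']
  have : U0 b₁ μ / Rg b₁ μ = Real.exp 1 := by
    rw [Rg]
    field_simp
  rw [this, Real.log_exp]

lemma logpart_eq_one :
    (Real.log (qH b₁ μ) - Real.log (1 - qH b₁ μ)) -
      (Real.log (qL b₁ μ) - Real.log (1 - qL b₁ μ)) = 1 := by
  have hU := U0_pos hb₁ hμ0 hμ1
  have hR := Rg_pos hb₁ hμ0 hμ1
  have hdH : (0:ℝ) < μ + Rg b₁ μ := by linarith
  have hdL : (0:ℝ) < μ + U0 b₁ μ := by linarith
  have e1 : 1 - qH b₁ μ = Rg b₁ μ / (μ + Rg b₁ μ) := by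
    rw [qH]; field_simp; ring
  have e2 : 1 - qL b₁ μ = U0 b₁ μ / (μ + U0 b₁ μ) := by
    rw [qL]; field_simp; ring
  rw [e1, e2, qH, qL, Real.log_div hμ0.ne' hdH.ne', Real.log_div hR.ne' hdH.ne',
    Real.log_div hμ0.ne' hdL.ne', Real.log_div hU.ne' hdL.ne']
  have := log_U0_sub_Rg hb₁ hμ0 hμ1
  linarith

lemma mul_qL_inv : μ * (qL b₁ μ)⁻¹ = μ + U0 b₁ μ := by
  rw [qL_inv hb₁ hμ0 hμ1]; field_simp

lemma mul_qH_inv : μ * (qH b₁ μ)⁻¹ = μ + Rg b₁ μ := by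
  rw [qH_inv hb₁ hμ0 hμ1]; field_simp

lemma int_ψσ : ∫ p, ψσ b₁ μ p = U0 b₁ μ - Rg b₁ μ + μ := by
  have hqL := qL_pos hb₁ hμ0 hμ1
  have hqLH := (qL_lt_qH hb₁ hμ0 hμ1).le
  have hqH1 := qH_lt_one hb₁ hμ0 hμ1
  rw [ψσ, integral_indicator_Icc hqLH]
  simp only [fσ]
  rw [int_G1 hμ0 hqL hqLH hqH1,
    logpart_eq_one hb₁ hμ0 hμ1, mul_sub, mul_qL_inv hb₁ hμ0 hμ1, mul_qH_inv hb₁ hμ0 hμ1]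
  ring

lemma integrable_ψσ : Integrable (ψσ b₁ μ) volume :=
  integrable_indicator_Icc _ _ (contOn_fσ hb₁ hμ0 hμ1 (qL_pos hb₁ hμ0 hμ1)
    (qH_lt_one hb₁ hμ0 hμ1))

lemma isProbability_σStar : IsProbabilityMeasure (σStar b₁ μ) := by
  apply isProbability_mixM (cσ_nonneg hb₁ hμ0 hμ1) (ψσ_nonneg hb₁ hμ0 hμ1)
    (integrable_ψσ hb₁ hμ0 hμ1)
  rw [int_ψσ hb₁ hμ0 hμ1, cσ]; ring

lemma σStar_null : σStar b₁ μ (Icc (0:ℝ) 1)ᶜ = 0 :=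
  mixM_null measurableSet_Icc (by constructor <;> norm_num)
    (ψσ_zero_outside hb₁ hμ0 hμ1)

lemma σStar_mean : ∫ p, p ∂(σStar b₁ μ) = μ := by
  have hqL := qL_pos hb₁ hμ0 hμ1
  have hqLH := (qL_lt_qH hb₁ hμ0 hμ1).le
  have hqH1 := qH_lt_one hb₁ hμ0 hμ1
  have key : (fun p => ψσ b₁ μ p * p) =
      (Icc (qL b₁ μ) (qH b₁ μ)).indicator (fun p => fσ μ p * p) := by
    funext p
    rw [ψσ, indicator_apply, indicator_apply]
    split_ifs with h
    · rfl
    · exact zero_mul p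
  rw [σStar, integral_mixM (cσ_nonneg hb₁ hμ0 hμ1) (measurable_ψσ hb₁ hμ0 hμ1)
      (ψσ_nonneg hb₁ hμ0 hμ1) measurable_id'
      (by rw [key]
          exact integrable_indicator_Icc _ _
            ((contOn_fσ hb₁ hμ0 hμ1 hqL hqH1).mul continuousOn_id)),
    key, integral_indicator_Icc hqLH]
  have congr1 : ∫ x in qL b₁ μ..qH b₁ μ, fσ μ x * x =
      ∫ x in qL b₁ μ..qH b₁ μ, μ / (x * (1-x)) := by
    apply intervalIntegral.integral_congr
    intro x hx
    rw [uIcc_of_le hqLH] at hx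
    have h1 : 0 < x := lt_of_lt_of_le hqL hx.1
    have h2 : x < 1 := lt_of_le_of_lt hx.2 hqH1
    have d1 : x^2*(1-x) ≠ 0 := (mul_pos (pow_pos h1 2) (by linarith : (0:ℝ) < 1 - x)).ne'
    have d2 : x*(1-x) ≠ 0 := (mul_pos h1 (by linarith : (0:ℝ) < 1 - x)).ne'
    simp only [fσ]
    rw [div_mul_eq_mul_div, div_eq_div_iff d1 d2]
    ring
  rw [congr1, int_G2 hμ0 hqL hqLH hqH1, logpart_eq_one hb₁ hμ0 hμ1]
  simp


include hb

lemma Ustar_zero : binUstar b₁ b₂ μ 0 = U0 b₁ μ := by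
  rw [binUstar]
  by_cases h : (0:ℝ) < b₂ - 1/μ
  · rw [if_pos h]
    have h4 : 1/μ < b₁ + 1 := by rw [hb] at h; linarith
    have h5 : 1 < (b₁+1)*μ := (div_lt_iff₀ hμ0).1 h4
    rw [U0, min_eq_right (by nlinarith : 1 - μ ≤ b₁ * μ)]
  · rw [if_neg h, if_pos (by linarith : (0:ℝ) ≤ b₁)]
    push_neg at h
    have h4 : b₁ + 1 ≤ 1/μ := by rw [hb] at h; linarith
    have h5 : (b₁+1)*μ ≤ 1 := by
      rw [← le_div_iff₀ hμ0]; exact h4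
    rw [U0, min_eq_left (by nlinarith : b₁ * μ ≤ 1 - μ)]
    ring

lemma σStar_surplus_bound (s : ℝ) (hs : 0 ≤ s) :
    binUstar b₁ b₂ μ s - ∫ p, binSurplus b₁ b₂ p s ∂(σStar b₁ μ) ≤ Rg b₁ μ := by
  have hqL := qL_pos hb₁ hμ0 hμ1
  have hqLH := qL_lt_qH hb₁ hμ0 hμ1
  have hqH1 := qH_lt_one hb₁ hμ0 hμ1
  by_cases hcase : sH b₁ μ ≤ s
  · have h1 : 0 ≤ ∫ p, binSurplus b₁ b₂ p s ∂(σStar b₁ μ) := by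
      apply integral_nonneg_of_ae
      filter_upwards [mixM_ae_mem measurableSet_Icc
        (by constructor <;> norm_num : (0:ℝ) ∈ Icc (0:ℝ) 1)
        (ψσ_zero_outside hb₁ hμ0 hμ1)] with p hp
      exact binSurplus_nonneg s hp.2
    have h2 := Ustar_le_Rg hb hb₁ hμ0 hμ1 s hcase
    linarith
  · push_neg at hcase
    have hb2s : (qH b₁ μ)⁻¹ < b₂ - s := by
      rw [← b2_sub_sH hb hb₁ hμ0 hμ1]; linarith
    have hqHinv : 0 < (qH b₁ μ)⁻¹ := inv_pos.2 (lt_trans hqL hqLH)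
    have hb2s0 : 0 < b₂ - s := lt_trans hqHinv hb2s
    have hinv_lt : (b₂ - s)⁻¹ < qH b₁ μ := by
      rw [← inv_inv (qH b₁ μ)]
      exact inv_strictAnti₀ hqHinv hb2s
    set a := max (qL b₁ μ) (b₂ - s)⁻¹ with ha
    have ha_pos : 0 < a := lt_of_lt_of_le hqL (le_max_left _ _)
    have haH : a ≤ qH b₁ μ := max_le hqLH.le hinv_lt.le
    have key : (fun p => ψσ b₁ μ p * binSurplus b₁ b₂ p s) =
        (Icc a (qH b₁ μ)).indicator (fun p => (1 - p) * fσ μ p) := by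
      funext p
      by_cases hp : p ∈ Icc (qL b₁ μ) (qH b₁ μ)
      · rw [ψσ, indicator_of_mem hp, binSurplus_eq hb]
        by_cases hc : a ≤ p
        · have h3 : (b₂ - s)⁻¹ ≤ p := le_trans (le_max_right _ _) hc
          have h4 : 1 ≤ (b₂ - s) * p := by
            have h6 := mul_le_mul_of_nonneg_left h3 hb2s0.le
            rwa [mul_inv_cancel₀ hb2s0.ne'] at h6
          rw [if_pos h4, indicator_of_mem (mem_Icc.2 ⟨hc, hp.2⟩)]
          ring
        · push_neg at hc
          have h3 : p < (b₂ - s)⁻¹ := by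
            by_contra hcon
            push_neg at hcon
            exact absurd (max_le hp.1 hcon) (not_le.2 hc)
          have h4 : ¬ 1 ≤ (b₂ - s) * p := by
            intro hcon
            have h5 := mul_lt_mul_of_pos_left h3 hb2s0
            rw [mul_inv_cancel₀ hb2s0.ne'] at h5
            linarith
          rw [if_neg h4, indicator_of_notMem (fun hmem => absurd hmem.1 (not_le.2 hc)),
            mul_zero]
      · rw [ψσ, indicator_of_notMem hp, zero_mul,
          indicator_of_notMem (fun hmem => hp ⟨le_trans (le_max_left _ _) hmem.1, hmem.2⟩)]
    have hint : Integrable (fun p => ψσ b₁ μ p * binSurplus b₁ b₂ p s) volume := by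
      rw [key]
      exact integrable_indicator_Icc _ _
        ((continuousOn_const.sub continuousOn_id).mul (contOn_fσ hb₁ hμ0 hμ1 ha_pos hqH1))
    have hs0 : binSurplus b₁ b₂ (0:ℝ) s = 0 := by
      rw [binSurplus_eq hb, if_neg (by norm_num)]
    rw [σStar, integral_mixM (cσ_nonneg hb₁ hμ0 hμ1) (measurable_ψσ hb₁ hμ0 hμ1)
      (ψσ_nonneg hb₁ hμ0 hμ1) (measurable_binSurplus_p b₁ b₂ s) hint, hs0, mul_zero, zero_add,
      key, integral_indicator_Icc haH]
    have congr1 : ∫ x in a..qH b₁ μ, (1 - x) * fσ μ x = ∫ x in a..qH b₁ μ, μ / x^2 := by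
      apply intervalIntegral.integral_congr
      intro x hx
      rw [uIcc_of_le haH] at hx
      have h1 : 0 < x := lt_of_lt_of_le ha_pos hx.1
      have h2 : x < 1 := lt_of_le_of_lt hx.2 hqH1
      have d1 : x^2*(1-x) ≠ 0 := (mul_pos (pow_pos h1 2) (by linarith : (0:ℝ) < 1 - x)).ne'
      simp only [fσ]
      rw [← mul_div_assoc, div_eq_div_iff d1 (pow_pos h1 2).ne']
      ring
    rw [congr1, int_G3 ha_pos haH]
    by_cases hsl : s ≤ sL b₁ μ
    · have hA : a = qL b₁ μ := by
        apply max_eq_left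
        have h5 : (qL b₁ μ)⁻¹ ≤ b₂ - s := by
          rw [← b2_sub_sL hb hb₁ hμ0 hμ1]; linarith
        calc (b₂ - s)⁻¹ ≤ ((qL b₁ μ)⁻¹)⁻¹ := inv_anti₀ (inv_pos.2 hqL) h5
          _ = qL b₁ μ := inv_inv _
      rw [hA, mul_sub, mul_qL_inv hb₁ hμ0 hμ1, mul_qH_inv hb₁ hμ0 hμ1]
      have h6 := Ustar_le hb hb₁ hμ0 hμ1 s hs
      linarith
    · push_neg at hsl
      have hA : a = (b₂ - s)⁻¹ := by
        apply max_eq_right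
        have h5 : b₂ - s ≤ (qL b₁ μ)⁻¹ := by
          rw [← b2_sub_sL hb hb₁ hμ0 hμ1]; linarith
        calc qL b₁ μ = ((qL b₁ μ)⁻¹)⁻¹ := (inv_inv _).symm
          _ ≤ (b₂ - s)⁻¹ := inv_anti₀ hb2s0 h5
      have hU : binUstar b₁ b₂ μ s = (b₁ - s) * μ :=
        Ustar_eq_on hb hb₁ hμ0 hμ1 s hsl.le (by linarith [sH_lt_b₁ hb₁ hμ0 hμ1])
      rw [hA, inv_inv, hU, mul_sub, mul_qH_inv hb₁ hμ0 hμ1, hb]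
      nlinarith [sq_nonneg (b₁ - s)]

end Sigma
end Stmt19
namespace Stmt19
section Adv
variable {b₁ b₂ μ : ℝ} (hb : b₂ = b₁ + 1) (hb₁ : 0 < b₁) (hμ0 : 0 < μ) (hμ1 : μ < 1)

noncomputable def φF (b₁ μ : ℝ) : ℝ → ℝ :=
  indicator (Icc (sL b₁ μ) (sH b₁ μ)) (fun s => (Rg b₁ μ / μ) / (b₁ - s)^2)

noncomputable def FAdv (b₁ μ : ℝ) : Measure ℝ := mixM (Real.exp 1)⁻¹ (sL b₁ μ) (φF b₁ μ)

lemma measurable_φF : Measurable (φF b₁ μ) :=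
  Measurable.indicator
    (measurable_const.div ((measurable_const.sub measurable_id).pow_const 2))
    measurableSet_Icc

include hb₁ hμ0 hμ1

lemma φF_nonneg : ∀ s, 0 ≤ φF b₁ μ s := by
  intro s
  rw [φF, indicator_apply]
  split_ifs with h
  · have hR := Rg_pos hb₁ hμ0 hμ1
    exact div_nonneg (div_nonneg hR.le hμ0.le) (sq_nonneg _)
  · exact le_refl 0

include hb

lemma b1_sub_sL : b₁ - sL b₁ μ = U0 b₁ μ / μ := by rw [sL]; ring
lemma b1_sub_sH : b₁ - sH b₁ μ = Rg b₁ μ / μ := by rw [sH]; ring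

lemma Rg_div_U0 : Rg b₁ μ / U0 b₁ μ = (Real.exp 1)⁻¹ := by
  have hU := U0_pos hb₁ hμ0 hμ1
  rw [Rg]
  field_simp

lemma int_φF : ∫ s, φF b₁ μ s = 1 - (Real.exp 1)⁻¹ := by
  have hU := U0_pos hb₁ hμ0 hμ1
  have hR := Rg_pos hb₁ hμ0 hμ1
  have hLH := (sL_lt_sH hb₁ hμ0 hμ1).le
  have hHb := sH_lt_b₁ hb₁ hμ0 hμ1
  rw [φF, integral_indicator_Icc hLH, int_G4 hLH hHb,
    b1_sub_sH hb hb₁ hμ0 hμ1, b1_sub_sL hb hb₁ hμ0 hμ1]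
  rw [mul_sub]
  have e1 : Rg b₁ μ / μ * (Rg b₁ μ / μ)⁻¹ = 1 :=
    mul_inv_cancel₀ (div_pos hR hμ0).ne'
  have e2 : Rg b₁ μ / μ * (U0 b₁ μ / μ)⁻¹ = (Real.exp 1)⁻¹ := by
    rw [← Rg_div_U0 hb hb₁ hμ0 hμ1]
    field_simp
  rw [e1, e2]

lemma isProbability_FAdv : IsProbabilityMeasure (FAdv b₁ μ) := by
  apply isProbability_mixM (by positivity) (φF_nonneg hb₁ hμ0 hμ1)
  · exact integrable_indicator_Icc _ _
      (continuousOn_const.div (by fun_prop)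
        (fun x (hx : x ∈ Icc (sL b₁ μ) (sH b₁ μ)) =>
          (pow_pos (by linarith [hx.2, sH_lt_b₁ hb₁ hμ0 hμ1] : (0:ℝ) < b₁ - x) 2).ne'))
  · rw [int_φF hb hb₁ hμ0 hμ1]; ring

lemma FAdv_ae_mem : ∀ᵐ s ∂(FAdv b₁ μ), s ∈ Icc (sL b₁ μ) (sH b₁ μ) :=
  mixM_ae_mem measurableSet_Icc
    (mem_Icc.2 ⟨le_refl _, (sL_lt_sH hb₁ hμ0 hμ1).le⟩)
    (fun s hs => indicator_of_notMem hs _)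

/-- The key pointwise bound: expected surplus against FAdv is at most Rg·p/μ. -/
lemma key1 (p : ℝ) (hp : p ∈ Icc (0:ℝ) 1) :
    ∫ s, binSurplus b₁ b₂ p s ∂(FAdv b₁ μ) ≤ (Rg b₁ μ / μ) * p := by
  have hU := U0_pos hb₁ hμ0 hμ1
  have hR := Rg_pos hb₁ hμ0 hμ1
  have hqL := qL_pos hb₁ hμ0 hμ1
  have hqLH := qL_lt_qH hb₁ hμ0 hμ1
  have hqH1 := qH_lt_one hb₁ hμ0 hμ1
  have hqH0 : 0 < qH b₁ μ := lt_trans hqL hqLH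
  have hLH := (sL_lt_sH hb₁ hμ0 hμ1).le
  have hHb := sH_lt_b₁ hb₁ hμ0 hμ1
  have hbsL : b₂ - sL b₁ μ = (qL b₁ μ)⁻¹ := b2_sub_sL hb hb₁ hμ0 hμ1
  have hbsH : b₂ - sH b₁ μ = (qH b₁ μ)⁻¹ := b2_sub_sH hb hb₁ hμ0 hμ1
  have hφm := measurable_φF (b₁ := b₁) (μ := μ)
  have hφ0 := φF_nonneg hb₁ hμ0 hμ1
  have hsm := measurable_binSurplus_s b₁ b₂ p
  have hc0 : (0:ℝ) ≤ (Real.exp 1)⁻¹ := by positivity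
  rcases lt_or_ge p (qL b₁ μ) with hc1 | hc1
  · -- p < qL : everything is zero
    have hkey : (fun s => φF b₁ μ s * binSurplus b₁ b₂ p s) = fun _ => (0:ℝ) := by
      funext s
      by_cases hs : s ∈ Icc (sL b₁ μ) (sH b₁ μ)
      · have hcond : ¬ 1 ≤ (b₂ - s) * p := by
          intro hcon
          have h2 : b₂ - s ≤ (qL b₁ μ)⁻¹ := by rw [← hbsL]; linarith [hs.1]
          have h3 : (b₂ - s) * p ≤ (qL b₁ μ)⁻¹ * p :=
            mul_le_mul_of_nonneg_right h2 hp.1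
          have h4 : (qL b₁ μ)⁻¹ * p < (qL b₁ μ)⁻¹ * qL b₁ μ :=
            mul_lt_mul_of_pos_left hc1 (inv_pos.2 hqL)
          rw [inv_mul_cancel₀ hqL.ne'] at h4
          linarith
        rw [binSurplus_eq hb, if_neg hcond, mul_zero]
      · rw [φF, indicator_of_notMem hs, zero_mul]
    rw [FAdv, integral_mixM hc0 hφm hφ0 hsm (by rw [hkey]; exact integrable_zero _ _ _),
      hkey]
    have hatom : binSurplus b₁ b₂ p (sL b₁ μ) = 0 := by
      rw [binSurplus_eq hb, if_neg]
      intro hcon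
      rw [hbsL] at hcon
      have h4 : (qL b₁ μ)⁻¹ * p < (qL b₁ μ)⁻¹ * qL b₁ μ :=
        mul_lt_mul_of_pos_left hc1 (inv_pos.2 hqL)
      rw [inv_mul_cancel₀ hqL.ne'] at h4
      linarith
    rw [hatom]
    simp
    exact mul_nonneg (div_nonneg hR.le hμ0.le) hp.1
  · rcases le_or_gt p (qH b₁ μ) with hc2 | hc2
    · -- qL ≤ p ≤ qH : exact equality
      have hp0 : 0 < p := lt_of_lt_of_le hqL hc1
      have hp1 : p < 1 := lt_of_le_of_lt hc2 hqH1
      set t := b₂ - 1/p with ht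
      have htL : sL b₁ μ ≤ t := by
        have h2 : 1/p ≤ (qL b₁ μ)⁻¹ := by
          rw [one_div]
          exact inv_anti₀ hqL hc1
        have h3 : b₂ - (qL b₁ μ)⁻¹ ≤ b₂ - 1/p := by linarith
        rw [← hbsL] at h3
        rw [ht]; linarith
      have htH : t ≤ sH b₁ μ := by
        have h2 : (qH b₁ μ)⁻¹ ≤ 1/p := by
          rw [one_div]; exact inv_anti₀ hp0 hc2
        have h3 : b₂ - 1/p ≤ b₂ - (qH b₁ μ)⁻¹ := by linarith
        rw [← hbsH] at h3
        rw [ht]; linarith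
      have htb : t < b₁ := lt_of_le_of_lt htH hHb
      have hb1t : b₁ - t = (1-p)/p := by rw [ht, hb]; field_simp; ring
      have hkey : (fun s => φF b₁ μ s * binSurplus b₁ b₂ p s) =
          indicator (Icc (sL b₁ μ) t)
            (fun s => ((1-p) * (Rg b₁ μ / μ)) / (b₁ - s)^2) := by
        funext s
        by_cases hs : s ∈ Icc (sL b₁ μ) (sH b₁ μ)
        · rw [φF, indicator_of_mem hs, binSurplus_eq hb]
          by_cases hst : s ≤ t
          · have hcond : 1 ≤ (b₂ - s) * p := by
              have h2 : 1/p ≤ b₂ - s := by rw [ht] at hst; linarith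
              calc (1:ℝ) = (1/p) * p := by field_simp
                _ ≤ (b₂ - s) * p := mul_le_mul_of_nonneg_right h2 hp0.le
            rw [if_pos hcond, indicator_of_mem (mem_Icc.2 ⟨hs.1, hst⟩)]
            ring
          · push_neg at hst
            have hcond : ¬ 1 ≤ (b₂ - s) * p := by
              intro hcon
              have h2 : b₂ - s < 1/p := by rw [ht] at hst; linarith
              have h3 : (b₂ - s) * p < (1/p) * p := mul_lt_mul_of_pos_right h2 hp0
              rw [one_div, inv_mul_cancel₀ hp0.ne'] at h3
              linarith
            rw [if_neg hcond, mul_zero,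
              indicator_of_notMem (fun hmem => absurd hmem.2 (not_le.2 hst))]
        · rw [φF, indicator_of_notMem hs, zero_mul,
            indicator_of_notMem
              (fun hmem => hs (mem_Icc.2 ⟨hmem.1, le_trans hmem.2 htH⟩))]
      rw [FAdv, integral_mixM hc0 hφm hφ0 hsm
        (by rw [hkey]
            exact integrable_indicator_Icc _ _
              (continuousOn_const.div (by fun_prop)
                (fun x (hx : x ∈ Icc (sL b₁ μ) t) =>
                  (pow_pos (by linarith [hx.2] : (0:ℝ) < b₁ - x) 2).ne'))),
        hkey, integral_indicator_Icc htL, int_G4 htL htb, hb1t,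
        b1_sub_sL hb hb₁ hμ0 hμ1]
      have hatom : binSurplus b₁ b₂ p (sL b₁ μ) = 1 - p := by
        rw [binSurplus_eq hb, if_pos]
        rw [hbsL]
        calc (1:ℝ) = (qL b₁ μ)⁻¹ * qL b₁ μ := (inv_mul_cancel₀ hqL.ne').symm
          _ ≤ (qL b₁ μ)⁻¹ * p := mul_le_mul_of_nonneg_left hc1 (inv_pos.2 hqL).le
      rw [hatom]
      have h1p : (0:ℝ) < 1 - p := by linarith
      have e3 : ((1-p)/p)⁻¹ = p/(1-p) := by rw [inv_div]
      have e4 : (U0 b₁ μ / μ)⁻¹ = μ / U0 b₁ μ := by rw [inv_div]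
      have final : (Real.exp 1)⁻¹ * (1-p) +
          ((1-p) * (Rg b₁ μ / μ)) * (p/(1-p) - μ/U0 b₁ μ) = Rg b₁ μ / μ * p := by
        rw [← Rg_div_U0 hb hb₁ hμ0 hμ1]
        field_simp
        ring
      rw [e3, e4, final]
    · -- qH < p
      have hp0 : 0 < p := lt_trans hqH0 hc2
      have hkey : (fun s => φF b₁ μ s * binSurplus b₁ b₂ p s) =
          indicator (Icc (sL b₁ μ) (sH b₁ μ))
            (fun s => ((1-p) * (Rg b₁ μ / μ)) / (b₁ - s)^2) := by
        funext s
        by_cases hs : s ∈ Icc (sL b₁ μ) (sH b₁ μ)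
        · have hb2s : (qH b₁ μ)⁻¹ ≤ b₂ - s := by rw [← hbsH]; linarith [hs.2]
          have hcond : 1 ≤ (b₂ - s) * p := by
            calc (1:ℝ) = (qH b₁ μ)⁻¹ * qH b₁ μ := (inv_mul_cancel₀ hqH0.ne').symm
              _ ≤ (b₂ - s) * p :=
                mul_le_mul hb2s hc2.le hqH0.le (le_trans (inv_pos.2 hqH0).le hb2s)
          rw [φF, indicator_of_mem hs, indicator_of_mem hs, binSurplus_eq hb,
            if_pos hcond]
          ring
        · rw [φF, indicator_of_notMem hs, zero_mul, indicator_of_notMem hs]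
      rw [FAdv, integral_mixM hc0 hφm hφ0 hsm
        (by rw [hkey]
            exact integrable_indicator_Icc _ _
              (continuousOn_const.div (by fun_prop)
                (fun x (hx : x ∈ Icc (sL b₁ μ) (sH b₁ μ)) =>
                  (pow_pos (by linarith [hx.2, hHb] : (0:ℝ) < b₁ - x) 2).ne'))),
        hkey, integral_indicator_Icc hLH, int_G4 hLH hHb,
        b1_sub_sH hb hb₁ hμ0 hμ1, b1_sub_sL hb hb₁ hμ0 hμ1]
      have hatom : binSurplus b₁ b₂ p (sL b₁ μ) = 1 - p := by
        rw [binSurplus_eq hb, if_pos]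
        rw [hbsL]
        calc (1:ℝ) = (qL b₁ μ)⁻¹ * qL b₁ μ := (inv_mul_cancel₀ hqL.ne').symm
          _ ≤ (qL b₁ μ)⁻¹ * p :=
            mul_le_mul_of_nonneg_left (by linarith) (inv_pos.2 hqL).le
      rw [hatom]
      have e5 : (Real.exp 1)⁻¹ * (1-p) +
          ((1-p) * (Rg b₁ μ / μ)) * ((Rg b₁ μ/μ)⁻¹ - (U0 b₁ μ/μ)⁻¹) = 1 - p := by
        have h6 : (U0 b₁ μ/μ)⁻¹ = μ / U0 b₁ μ := by rw [inv_div]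
        have h7 : (Rg b₁ μ/μ)⁻¹ = μ / Rg b₁ μ := by rw [inv_div]
        rw [h6, h7, ← Rg_div_U0 hb hb₁ hμ0 hμ1]
        field_simp
        ring
      rw [e5]
      have h8 : μ < p * (μ + Rg b₁ μ) := by
        have := (div_lt_iff₀ (by linarith : (0:ℝ) < μ + Rg b₁ μ)).1 hc2
        linarith [this]
      rw [div_mul_eq_mul_div, le_div_iff₀ hμ0]
      nlinarith

lemma key2 : ∫ s, binUstar b₁ b₂ μ s ∂(FAdv b₁ μ) = 2 * Rg b₁ μ := by
  have hU := U0_pos hb₁ hμ0 hμ1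
  have hR := Rg_pos hb₁ hμ0 hμ1
  have hLH := (sL_lt_sH hb₁ hμ0 hμ1).le
  have hHb := sH_lt_b₁ hb₁ hμ0 hμ1
  have hc0 : (0:ℝ) ≤ (Real.exp 1)⁻¹ := by positivity
  have hkey : (fun s => φF b₁ μ s * binUstar b₁ b₂ μ s) =
      indicator (Icc (sL b₁ μ) (sH b₁ μ)) (fun s => Rg b₁ μ / (b₁ - s)) := by
    funext s
    by_cases hs : s ∈ Icc (sL b₁ μ) (sH b₁ μ)
    · rw [φF, indicator_of_mem hs, indicator_of_mem hs,
        Ustar_eq_on hb hb₁ hμ0 hμ1 s hs.1 (by linarith [hs.2])]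
      have hbs : (0:ℝ) < b₁ - s := by linarith [hs.2]
      field_simp
    · rw [φF, indicator_of_notMem hs, zero_mul, indicator_of_notMem hs]
  rw [FAdv, integral_mixM hc0 (measurable_φF) (φF_nonneg hb₁ hμ0 hμ1)
      (measurable_binUstar b₁ b₂ μ)
      (by rw [hkey]
          exact integrable_indicator_Icc _ _
            (continuousOn_const.div (by fun_prop)
              (fun x (hx : x ∈ Icc (sL b₁ μ) (sH b₁ μ)) =>
                (by linarith [hx.2, hHb] : (0:ℝ) < b₁ - x).ne'))),
    hkey, integral_indicator_Icc hLH, int_G5 hLH hHb,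
    Ustar_sL hb hb₁ hμ0 hμ1, b1_sub_sL hb hb₁ hμ0 hμ1, b1_sub_sH hb hb₁ hμ0 hμ1,
    Real.log_div hU.ne' hμ0.ne', Real.log_div hR.ne' hμ0.ne']
  have h1 := log_U0_sub_Rg hb₁ hμ0 hμ1
  have h2 : (Real.exp 1)⁻¹ * U0 b₁ μ = Rg b₁ μ := by
    rw [Rg, div_eq_mul_inv, mul_comm]
  have h3 : Real.log (U0 b₁ μ) - Real.log μ - (Real.log (Rg b₁ μ) - Real.log μ) = 1 := by
    linarith
  rw [h3, h2]
  ring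

lemma FAdv_ae_nonneg : ∀ᵐ s ∂(FAdv b₁ μ), 0 ≤ s := by
  filter_upwards [FAdv_ae_mem hb hb₁ hμ0 hμ1] with s hs
  exact le_trans (sL_nonneg hb₁ hμ0 hμ1) hs.1

lemma lower_bound (σ : Measure ℝ) (hσP : IsProbabilityMeasure σ)
    (hσS : σ (Icc (0:ℝ) 1)ᶜ = 0) (hmean : ∫ p, p ∂σ = μ) :
    ∃ s, 0 ≤ s ∧ Rg b₁ μ ≤ binUstar b₁ b₂ μ s - ∫ p, binSurplus b₁ b₂ p s ∂σ := by
  have hR := Rg_pos hb₁ hμ0 hμ1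
  have hU := U0_pos hb₁ hμ0 hμ1
  by_contra hcon
  push_neg at hcon
  haveI hFP : IsProbabilityMeasure (FAdv b₁ μ) := isProbability_FAdv hb hb₁ hμ0 hμ1
  set F := FAdv b₁ μ with hF
  have hσae : ∀ᵐ p ∂σ, p ∈ Icc (0:ℝ) 1 := by
    rw [ae_iff]; exact hσS
  -- measurability of the surplus kernel
  have hsm_pair : StronglyMeasurable (Function.uncurry fun p s => binSurplus b₁ b₂ p s) :=
    (measurable_binSurplus_pair b₁ b₂).stronglyMeasurable
  -- W s = expected surplus of σ against seller s
  set W : ℝ → ℝ := fun s => ∫ p, binSurplus b₁ b₂ p s ∂σ with hWdef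
  have hWsm : StronglyMeasurable W := hsm_pair.integral_prod_left
  have hWb : ∀ s, ‖W s‖ ≤ 1 := by
    intro s
    have := norm_integral_le_of_norm_le_const (μ := σ)
      (f := fun p => binSurplus b₁ b₂ p s) (C := 1)
      (by filter_upwards [hσae] with p hp
          exact norm_binSurplus_le s hp.1 hp.2)
    simpa using this
  have hWint : Integrable W F :=
    Integrable.mono' (integrable_const 1) hWsm.aestronglyMeasurable
      (Filter.Eventually.of_forall fun s => by simpa using hWb s)
  have hUint : Integrable (binUstar b₁ b₂ μ) F := by
    refine Integrable.mono' (integrable_const (U0 b₁ μ))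
      (measurable_binUstar b₁ b₂ μ).aestronglyMeasurable ?_
    filter_upwards [FAdv_ae_nonneg hb hb₁ hμ0 hμ1] with s hs
    rw [Real.norm_eq_abs, abs_le]
    constructor
    · have h2 : 0 ≤ binUstar b₁ b₂ μ s := by
        rw [binUstar]
        split_ifs with h3 h4
        · linarith
        · push_neg at h3
          exact mul_nonneg (by linarith) hμ0.le
        · exact le_refl 0
      linarith
    · exact Ustar_le hb hb₁ hμ0 hμ1 s hs
  -- Fubini
  have hprod : Integrable (Function.uncurry fun s p => binSurplus b₁ b₂ p s) (F.prod σ) := by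
    refine Integrable.mono' (integrable_const 1)
      (((measurable_binSurplus_pair b₁ b₂).comp measurable_swap).aestronglyMeasurable) ?_
    rw [ae_iff]
    refine measure_mono_null (fun z hz => ?_)
      (show (F.prod σ) ((univ : Set ℝ) ×ˢ (Icc (0:ℝ) 1)ᶜ) = 0 by
        rw [Measure.prod_prod, hσS, mul_zero])
    simp only [Function.uncurry, mem_setOf_eq, not_le] at hz
    exact ⟨mem_univ _,
      fun hmem => absurd (norm_binSurplus_le z.1 hmem.1 hmem.2) (not_le.2 hz)⟩
  have hswap := integral_integral_swap (f := fun s p => binSurplus b₁ b₂ p s) hprod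
  -- pointwise bound integrated over σ
  have hgsm : StronglyMeasurable fun p => ∫ s, binSurplus b₁ b₂ p s ∂F :=
    StronglyMeasurable.integral_prod_right
      (f := fun p s => binSurplus b₁ b₂ p s) hsm_pair
  have hgint : Integrable (fun p => ∫ s, binSurplus b₁ b₂ p s ∂F) σ := by
    refine Integrable.mono' (integrable_const 1) hgsm.aestronglyMeasurable ?_
    filter_upwards [hσae] with p hp
    have := norm_integral_le_of_norm_le_const (μ := F)
      (f := fun s => binSurplus b₁ b₂ p s) (C := 1)
      (Filter.Eventually.of_forall fun s => norm_binSurplus_le s hp.1 hp.2)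
    simpa using this
  have hidint : Integrable (fun p : ℝ => p) σ := by
    refine Integrable.mono' (integrable_const 1)
      measurable_id'.aestronglyMeasurable ?_
    filter_upwards [hσae] with p hp
    rw [Real.norm_eq_abs, abs_le]
    exact ⟨by linarith [hp.1], hp.2⟩
  have h1 : ∫ s, W s ∂F ≤ Rg b₁ μ := by
    rw [hWdef, hswap]
    calc ∫ p, (∫ s, binSurplus b₁ b₂ p s ∂F) ∂σ
        ≤ ∫ p, (Rg b₁ μ / μ) * p ∂σ := by
          apply integral_mono_ae hgint (hidint.const_mul _)
          filter_upwards [hσae] with p hp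
          exact key1 hb hb₁ hμ0 hμ1 p hp
      _ = (Rg b₁ μ / μ) * μ := by rw [integral_const_mul, hmean]
      _ = Rg b₁ μ := by field_simp
  -- strict lower bound via the adversary
  have h2 : Rg b₁ μ < ∫ s, W s ∂F := by
    set D : ℝ → ℝ := fun s => W s - (binUstar b₁ b₂ μ s - Rg b₁ μ) with hDdef
    have hae_pos : ∀ᵐ s ∂F, 0 < D s := by
      filter_upwards [FAdv_ae_nonneg hb hb₁ hμ0 hμ1] with s hs
      have h3 := hcon s hs
      rw [hDdef]
      simp only
      linarith
    have hDint : Integrable D F := hWint.sub (hUint.sub (integrable_const _))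
    have hpos : 0 < ∫ s, D s ∂F := by
      rcases lt_or_ge 0 (∫ s, D s ∂F) with h | h
      · exact h
      · exfalso
        have hnn : 0 ≤ᵐ[F] D := hae_pos.mono fun s h => h.le
        have hz : ∫ s, D s ∂F = 0 := le_antisymm h (integral_nonneg_of_ae hnn)
        rw [integral_eq_zero_iff_of_nonneg_ae hnn hDint] at hz
        have hfalse : ∀ᵐ s ∂F, False := by
          filter_upwards [hae_pos, hz] with s hp he
          rw [he] at hp
          exact lt_irrefl 0 hp
        have hne : F ≠ 0 := IsProbabilityMeasure.ne_zero F
        exact (MeasureTheory.ae_neBot.2 hne).ne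
          (Filter.eventually_false_iff_eq_bot.1 hfalse)
    have e1 : ∫ s, (W s - binUstar b₁ b₂ μ s) ∂F
        = (∫ s, W s ∂F) - ∫ s, binUstar b₁ b₂ μ s ∂F := integral_sub hWint hUint
    have hsplit : ∫ s, D s ∂F
        = (∫ s, W s ∂F) - (∫ s, binUstar b₁ b₂ μ s ∂F) + Rg b₁ μ := by
      calc ∫ s, D s ∂F = ∫ s, ((W s - binUstar b₁ b₂ μ s) + Rg b₁ μ) ∂F := by
            apply integral_congr_ae
            apply Filter.Eventually.of_forall
            intro s
            rw [hDdef]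
            ring
        _ = ((∫ s, W s ∂F) - ∫ s, binUstar b₁ b₂ μ s ∂F) + Rg b₁ μ := by
            rw [integral_add (f := fun s => W s - binUstar b₁ b₂ μ s) (g := fun _ => Rg b₁ μ) (hWint.sub hUint) (integrable_const _), e1, integral_const]
            simp
    rw [hsplit, key2 hb hb₁ hμ0 hμ1] at hpos
    linarith
  linarith

end Adv
end Stmt19

/-- Minimax regret in the binary buyer-type model equals U*(0)/e: every
segmentation (Bayes-plausible distribution over posteriors with mean μ) incurs
regret at least U*(0)/e against some seller valuation, and some segmentation
(the BBM hazard-rate one) guarantees regret at most U*(0)/e against every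
seller valuation; moreover U*(0) = 1-μ if μ > 1/b₂ and b₁μ otherwise. -/
theorem stmt_19 (b₁ b₂ μ : ℝ) (hb : b₂ = b₁ + 1) (hb₁ : 0 < b₁)
    (hμ : μ ∈ Set.Ioo (0:ℝ) 1) :
    (∀ σ : Measure ℝ, IsProbabilityMeasure σ → σ (Set.Icc (0:ℝ) 1)ᶜ = 0 →
      (∫ p, p ∂σ) = μ →
      ∃ s, 0 ≤ s ∧
        binUstar b₁ b₂ μ 0 / Real.exp 1 ≤
          binUstar b₁ b₂ μ s - ∫ p, binSurplus b₁ b₂ p s ∂σ) ∧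
    (∃ σ : Measure ℝ, IsProbabilityMeasure σ ∧ σ (Set.Icc (0:ℝ) 1)ᶜ = 0 ∧
      (∫ p, p ∂σ) = μ ∧
      ∀ s, 0 ≤ s →
        binUstar b₁ b₂ μ s - (∫ p, binSurplus b₁ b₂ p s ∂σ) ≤
          binUstar b₁ b₂ μ 0 / Real.exp 1) ∧
    binUstar b₁ b₂ μ 0 = (if 1 / b₂ < μ then 1 - μ else b₁ * μ) := by
  obtain ⟨hμ0, hμ1⟩ := hμ
  have hRdef : binUstar b₁ b₂ μ 0 / Real.exp 1 = Stmt19.Rg b₁ μ := by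
    rw [Stmt19.Ustar_zero hb hb₁ hμ0 hμ1, Stmt19.Rg]
  have hb2 : 0 < b₂ := by rw [hb]; linarith
  refine ⟨?_, ?_, ?_⟩
  · intro σ hP hS hmean
    obtain ⟨s, hs0, hs⟩ := Stmt19.lower_bound hb hb₁ hμ0 hμ1 σ hP hS hmean
    exact ⟨s, hs0, by rw [hRdef]; exact hs⟩
  · refine ⟨Stmt19.σStar b₁ μ, Stmt19.isProbability_σStar hb₁ hμ0 hμ1,
      Stmt19.σStar_null hb₁ hμ0 hμ1, Stmt19.σStar_mean hb₁ hμ0 hμ1, fun s hs => ?_⟩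
    rw [hRdef]
    exact Stmt19.σStar_surplus_bound hb hb₁ hμ0 hμ1 s hs
  · rw [Stmt19.Ustar_zero hb hb₁ hμ0 hμ1, Stmt19.U0]
    by_cases h : 1/b₂ < μ
    · have h1 : 1 < μ * b₂ := (div_lt_iff₀ hb2).1 h
      rw [hb] at h1
      rw [if_pos h, min_eq_right (by nlinarith : 1 - μ ≤ b₁ * μ)]
    · push_neg at h
      have h1 : μ * b₂ ≤ 1 := (le_div_iff₀ hb2).1 h
      rw [hb] at h1
      rw [if_neg (not_lt.2 h), min_eq_left (by nlinarith : b₁ * μ ≤ 1 - μ)]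
end
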